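/- arXiv:1602.00936 — 7 statements merged into one kernel-verified Lean document; each statement's English description precedes it below -/
import Mathlib

section
/- Let A(X) be the free complex vector space on the proper sequences in P(X), equipped with the bilinear extension of the sequence multiplication. For I a proper subset of X, write Î = {I, X∖I} ∈ A(X). If a, b ∈ A(X) and (1 − Î)·a = 0 (where 1 = {X} is the unit), then (1 − Î)·(b·a) = 0. -/
open scoped Classical

namespace GRF

variable {α : Type*} [DecidableEq α]

/-- `J` is a proper (nonempty, not everything) subset of `X`. -/
def IsProperSubset (X J : Finset α) : Prop := J ⊆ X ∧ J ≠ ∅ ∧ J ≠ X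

/-- A proper sequence in `P(X)`: a nonempty list of pairwise disjoint nonempty
subsets of `X` with union `X`. -/
def IsProperSeq (X : Finset α) (c : List (Finset α)) : Prop :=
  c ≠ [] ∧ (∀ J ∈ c, J ≠ ∅) ∧ List.Pairwise (fun I J => I ∩ J = ∅) c ∧
    c.foldr (· ∪ ·) ∅ = X

/-- The product of two sequences: all `A_i ∩ B_j`, ordered first by `j` then by `i`,
with empty intersections deleted. -/
noncomputable def seqMul (a b : List (Finset α)) : List (Finset α) :=
  ((b.map fun B => a.map fun A => A ∩ B).flatten).filter fun J => J ≠ ∅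

/-- The set `S' = {J ⊆ X : X \ J ∈ S}` opposite to `S`. -/
def opp (X : Finset α) (S : Set (Finset α)) : Set (Finset α) :=
  {J | J ⊆ X ∧ X \ J ∈ S}

/-- A paracell associated to `X`. -/
def IsParacell (X : Finset α) (S : Set (Finset α)) : Prop :=
  S.Nonempty ∧ (∀ J ∈ S, IsProperSubset X J) ∧
    ∀ I ∈ S, ∀ J ∈ S, I ∩ J ∈ S ∨ I ∪ J ∈ S

/-- A precell associated to `X`. -/
def IsPrecell (X : Finset α) (S : Set (Finset α)) : Prop :=
  IsParacell X S ∧ ∀ J : Finset α, IsProperSubset X J → J ∈ S ∨ X \ J ∈ S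

/-- A cell associated to `X`: a precell admitting real weights with zero total sum,
positive on all members of the cell. -/
def IsCell (X : Finset α) (S : Set (Finset α)) : Prop :=
  IsPrecell X S ∧ ∃ s : α → ℝ,
    (∑ j ∈ X, s j) = 0 ∧ ∀ J ∈ S, 0 < ∑ j ∈ J, s j

/-- `Y ↓ S` for `S` a paracell associated to `X`. -/
def cellDown (Y X : Finset α) (S : Set (Finset α)) : Set (Finset α) :=
  {J | IsProperSubset (Y ∪ X) J ∧ (J ∩ X = X ∨ J ∩ X ∈ S)}

/-- `Y ↑ S'` for `S'` a paracell associated to `X`. -/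
def cellUp (Y X : Finset α) (S : Set (Finset α)) : Set (Finset α) :=
  {J | IsProperSubset (Y ∪ X) J ∧ (J ∩ X = ∅ ∨ J ∩ X ∈ S)}

/-- `Y ↓ j` for a single index `j`. -/
def ptDown (Y : Finset α) (j : α) : Set (Finset α) :=
  {J | IsProperSubset (insert j Y) J ∧ j ∈ J}

/-- `Y ↑ j` for a single index `j`. -/
def ptUp (Y : Finset α) (j : α) : Set (Finset α) :=
  {J | IsProperSubset (insert j Y) J ∧ j ∉ J}

/-- The underlying vector space of the algebra `A(X)`: formal complex linear
combinations of sequences of subsets. -/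
abbrev AX (α : Type*) [DecidableEq α] : Type _ := (List (Finset α)) →₀ ℂ

/-- The multiplication of `A(X)`, extending `seqMul` bilinearly. -/
noncomputable def amul (x y : AX α) : AX α :=
  x.sum fun a ca => y.sum fun b cb => Finsupp.single (seqMul a b) (ca * cb)

/-- The unit `{X}` of `A(X)`. -/
noncomputable def oneA (X : Finset α) : AX α := Finsupp.single [X] 1

/-- `Î = {I, X \ I}` as an element of `A(X)`. -/
noncomputable def hatI (X I : Finset α) : AX α := Finsupp.single [I, X \ I] 1

/-- Product of a list of elements of `A(X)` (with unit `{X}`). -/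
noncomputable def aprod (X : Finset α) (l : List (AX α)) : AX α :=
  l.foldr amul (oneA X)

/-- A `ν`-chain associated to `S'`: a proper sequence all of whose proper initial
partial unions lie in `S'`. -/
def IsChainFor (X : Finset α) (S' : Set (Finset α)) (c : List (Finset α)) : Prop :=
  IsProperSeq X c ∧
    ∀ r : ℕ, 0 < r → r < c.length → ((c.take r).foldr (· ∪ ·) ∅) ∈ S'

lemma IsProperSeq.nodup {X : Finset α} {c : List (Finset α)}
    (h : IsProperSeq X c) : c.Nodup := by
  obtain ⟨-, hne, hpw, -⟩ := h
  refine List.Pairwise.imp_of_mem ?_ hpw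
  intro a b ha _ hab
  intro h'
  subst h'
  exact hne a ha (by simpa using hab)

/-- `U_S = Σ_ν Σ_{ν-chains for S'} (−1)^{ν−1} {J_1,…,J_ν}`, as a function of the
opposite paracell `S'`. -/
noncomputable def US [Fintype α] (X : Finset α) (S' : Set (Finset α)) : AX α :=
  Finsupp.ofSupportFinite
    (fun c => if IsChainFor X S' c then (-1 : ℂ) ^ (c.length - 1) else 0)
    (Set.Finite.subset
      (List.finite_length_le (Finset α) (Fintype.card (Finset α)))
      (by
        intro c hc
        have h : IsChainFor X S' c := by
          by_contra h
          simp [Function.mem_support, h] at hc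
        exact h.1.nodup.length_le_card))

/-- The underlying vector space of `A(A∪{1}) ⊗ A(B∪{1})`. -/
abbrev AX2 (α : Type*) [DecidableEq α] : Type _ :=
  (List (Finset α) × List (Finset α)) →₀ ℂ

/-- The multiplication of the tensor product algebra. -/
noncomputable def tmul (x y : AX2 α) : AX2 α :=
  x.sum fun a ca => y.sum fun b cb =>
    Finsupp.single (seqMul a.1 b.1, seqMul a.2 b.2) (ca * cb)

/-- The tensor `u ⊗ v` of two elements of `A(A∪{1})` and `A(B∪{1})`. -/
noncomputable def tens (u v : AX α) : AX2 α :=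
  u.sum fun a ca => v.sum fun b cb => Finsupp.single (a, b) (ca * cb)

/-- The pair `(c_A, c_B)` of traces of a sequence `c` on `A∪{1}` and `B∪{1}`,
with empty sets deleted. -/
noncomputable def facSeq (A1 B1 : Finset α) (c : List (Finset α)) :
    List (Finset α) × List (Finset α) :=
  ((c.map fun J => J ∩ A1).filter fun J => J ≠ ∅,
   (c.map fun J => J ∩ B1).filter fun J => J ≠ ∅)

/-- The factorization map `Fac : A(X) → A(A∪{1}) ⊗ A(B∪{1})`. -/
noncomputable def Fac (A1 B1 : Finset α) (x : AX α) : AX2 α :=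
  x.sum fun c cc => Finsupp.single (facSeq A1 B1 c) cc

/-- The paracell `(S‖1,A)` built from opposite paracells `S`, `S'` relative to
`X = A ∪ B ∪ {o}`. -/
def restCell (A : Finset α) (o : α) (S S' : Set (Finset α)) : Set (Finset α) :=
  {J | IsProperSubset (insert o A) J ∧
    ((J ⊆ A ∧ J ∈ S) ∨ (o ∈ J ∧ A \ J ∈ S'))}


lemma mem_seqMul_ne_empty {a b : List (Finset α)} {D : Finset α}
    (h : D ∈ seqMul a b) : D ≠ ∅ := by
  have := List.of_mem_filter h
  simpa using this

lemma mem_seqMul_subset_right {a b : List (Finset α)} {D : Finset α}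
    (h : D ∈ seqMul a b) : ∃ B ∈ b, D ⊆ B := by
  have h' := List.mem_of_mem_filter h
  simp only [List.mem_flatten, List.mem_map] at h'
  obtain ⟨l, ⟨B, hB, rfl⟩, hD⟩ := h'
  obtain ⟨A, hA, rfl⟩ := List.mem_map.mp hD
  exact ⟨B, hB, Finset.inter_subset_right⟩

lemma mem_seqMul_subset_left {a b : List (Finset α)} {D : Finset α}
    (h : D ∈ seqMul a b) : ∃ A ∈ a, D ⊆ A := by
  have h' := List.mem_of_mem_filter h
  simp only [List.mem_flatten, List.mem_map] at h'
  obtain ⟨l, ⟨B, hB, rfl⟩, hD⟩ := h'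
  obtain ⟨A, hA, rfl⟩ := List.mem_map.mp hD
  exact ⟨A, hA, Finset.inter_subset_left⟩

lemma seqMul_one_left {X : Finset α} {e : List (Finset α)}
    (he : ∀ B ∈ e, B ⊆ X ∧ B ≠ ∅) : seqMul [X] e = e := by
  induction e with
  | nil => rfl
  | cons B e ih =>
    obtain ⟨h1, h2⟩ := he B List.mem_cons_self
    have ih' := ih fun C hC => he C (List.mem_cons_of_mem _ hC)
    simp only [seqMul, List.map_cons, List.map_nil, List.flatten_cons,
      List.filter_append] at ih' ⊢
    rw [Finset.inter_eq_right.mpr h1, ih']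
    simp [h2]

lemma seqMul_hat_left {X I : Finset α} {e : List (Finset α)}
    (he : ∀ B ∈ e, B ≠ ∅ ∧ (B ⊆ I ∨ B ⊆ X \ I)) :
    seqMul [I, X \ I] e = e := by
  induction e with
  | nil => rfl
  | cons B e ih =>
    obtain ⟨h1, h2⟩ := he B List.mem_cons_self
    have ih' := ih fun C hC => he C (List.mem_cons_of_mem _ hC)
    simp only [seqMul, List.map_cons, List.map_nil, List.flatten_cons,
      List.filter_append] at ih' ⊢
    rcases h2 with h2 | h2
    · have e1 : I ∩ B = B := Finset.inter_eq_right.mpr h2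
      have e2 : (X \ I) ∩ B = ∅ := by
        apply Finset.eq_empty_of_forall_notMem
        intro x hx
        simp only [Finset.mem_inter, Finset.mem_sdiff] at hx
        exact hx.1.2 (h2 hx.2)
      rw [e1, e2, ih']
      simp [h1]
    · have e1 : I ∩ B = ∅ := by
        apply Finset.eq_empty_of_forall_notMem
        intro x hx
        simp only [Finset.mem_inter] at hx
        exact (Finset.mem_sdiff.mp (h2 hx.2)).2 hx.1
      have e2 : (X \ I) ∩ B = B := Finset.inter_eq_right.mpr h2
      rw [e1, e2, ih']
      simp [h1]

lemma amul_sub_left' (x y z : AX α) : amul (x - y) z = amul x z - amul y z := by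
  unfold amul
  apply Finsupp.sum_sub_index
  intro a b₁ b₂
  rw [← Finsupp.sum_sub]
  exact Finsupp.sum_congr fun c _ => by rw [sub_mul, Finsupp.single_sub]

lemma amul_single_one' (k : List (Finset α)) (y : AX α)
    (hy : ∀ c ∈ y.support, seqMul k c = c) :
    amul (Finsupp.single k 1) y = y := by
  unfold amul
  rw [Finsupp.sum_single_index (by simp)]
  calc y.sum (fun b cb => Finsupp.single (seqMul k b) (1 * cb))
      = y.sum fun b cb => Finsupp.single b cb := by
        apply Finsupp.sum_congr
        intro c hc
        rw [hy c hc, one_mul]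
    _ = y := Finsupp.sum_single y

lemma mem_support_amul {x y : AX α} {e : List (Finset α)}
    (he : e ∈ (amul x y).support) :
    ∃ c ∈ x.support, ∃ d ∈ y.support, e = seqMul c d := by
  unfold amul at he
  have h1 := Finsupp.support_sum he
  obtain ⟨c, hc, h2⟩ := Finset.mem_biUnion.mp h1
  have h3 := Finsupp.support_sum h2
  obtain ⟨d, hd, h4⟩ := Finset.mem_biUnion.mp h3
  have h5 := Finsupp.support_single_subset h4
  exact ⟨c, hc, d, hd, Finset.mem_singleton.mp h5⟩

lemma mem_subset_foldr {B : Finset α} {l : List (Finset α)} (h : B ∈ l) :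
    B ⊆ l.foldr (· ∪ ·) ∅ := by
  induction l with
  | nil => simp at h
  | cons C l ih =>
    rcases List.mem_cons.mp h with rfl | h
    · exact Finset.subset_union_left
    · exact (ih h).trans Finset.subset_union_right


/-- If `(1 - Î)·a = 0` in `A(X)` then `(1 - Î)·(b·a) = 0`. -/
theorem one_sub_hatI_annihilates {α : Type*} [DecidableEq α] (X : Finset α)
    (hX : 2 ≤ X.card) (I : Finset α) (hI : IsProperSubset X I)
    (a b : AX α)
    (ha : ∀ c ∈ a.support, IsProperSeq X c)
    (hb : ∀ c ∈ b.support, IsProperSeq X c)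
    (h : amul (oneA X - hatI X I) a = 0) :
    amul (oneA X - hatI X I) (amul b a) = 0 := by
  -- blocks of sequences in the support of `a` are nonempty subsets of `X`
  have hXa : ∀ c ∈ a.support, ∀ B ∈ c, B ⊆ X ∧ B ≠ ∅ := by
    intro c hc B hB
    obtain ⟨-, hne, -, hun⟩ := ha c hc
    exact ⟨hun ▸ mem_subset_foldr hB, hne B hB⟩
  -- `1 · a = a`
  have h1 : amul (oneA X) a = a :=
    amul_single_one' _ _ fun c hc => seqMul_one_left (hXa c hc)
  -- hence `a = Î · a`
  have ha' : a = amul (hatI X I) a := by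
    rw [amul_sub_left', h1] at h
    exact sub_eq_zero.mp h
  rw [amul_sub_left']
  -- `1 · (b·a) = b·a`
  have h2 : amul (oneA X) (amul b a) = amul b a := by
    apply amul_single_one'
    intro e he
    obtain ⟨c, hc, d, hd, rfl⟩ := mem_support_amul he
    apply seqMul_one_left
    intro B hB
    refine ⟨?_, mem_seqMul_ne_empty hB⟩
    obtain ⟨D, hD, hBD⟩ := mem_seqMul_subset_right hB
    exact hBD.trans (hXa d hd D hD).1
  -- `Î · (b·a) = b·a`, using `a = Î·a`
  have h3 : amul (hatI X I) (amul b a) = amul b a := by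
    conv_lhs => rw [ha']
    have key : amul (hatI X I) (amul b (amul (hatI X I) a)) =
        amul b (amul (hatI X I) a) := by
      apply amul_single_one'
      intro e he
      obtain ⟨c, hc, d, hd, rfl⟩ := mem_support_amul he
      apply seqMul_hat_left
      intro B hB
      refine ⟨mem_seqMul_ne_empty hB, ?_⟩
      obtain ⟨D, hD, hBD⟩ := mem_seqMul_subset_right hB
      obtain ⟨d', hd', d0, hd0, rfl⟩ := mem_support_amul hd
      have hd'' := Finset.mem_singleton.mp (Finsupp.support_single_subset hd')
      subst hd''
      obtain ⟨A, hA, hDA⟩ := mem_seqMul_subset_left hD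
      rcases List.mem_cons.mp hA with rfl | hA
      · exact Or.inl (hBD.trans hDA)
      · rcases List.mem_cons.mp hA with rfl | hA
        · exact Or.inr (hBD.trans hDA)
        · simp at hA
    rw [key, ← ha']
  rw [h2, h3, sub_self]

end GRF
end

section
/- If S is a paracell associated to X, then the set S' = {J ⊆ X : X∖J ∈ S} is also a paracell, and S ∩ S' = ∅. -/
open scoped Classical

namespace GRF

variable {α : Type*} [DecidableEq α]

/-- The opposite `S' = {J ⊆ X : X∖J ∈ S}` of a paracell is a paracell, disjoint from `S`. -/
theorem opp_paracell {α : Type*} [DecidableEq α] (X : Finset α) (hX : 2 ≤ X.card)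
    (S : Set (Finset α)) (hS : IsParacell X S) :
    IsParacell X (opp X S) ∧ S ∩ opp X S = ∅ := by
  obtain ⟨⟨I0, hI0⟩, hprop, hclos⟩ := hS
  have hkey : ∀ J ∈ S, X \ (X \ J) = J := by
    intro J hJ
    exact Finset.sdiff_sdiff_eq_self (hprop J hJ).1
  constructor
  · refine ⟨⟨X \ I0, Finset.sdiff_subset, by rw [hkey I0 hI0]; exact hI0⟩, ?_, ?_⟩
    · rintro J ⟨hJX, hJS⟩
      obtain ⟨h1, h2, h3⟩ := hprop _ hJS
      refine ⟨hJX, ?_, ?_⟩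
      · rintro rfl; simp at h3
      · rintro rfl; simp at h2
    · rintro I ⟨hIX, hIS⟩ J ⟨hJX, hJS⟩
      have h1 : X \ (I ∩ J) = (X \ I) ∪ (X \ J) := by ext x; simp; tauto
      have h2 : X \ (I ∪ J) = (X \ I) ∩ (X \ J) := by ext x; simp; tauto
      rcases hclos _ hIS _ hJS with h | h
      · right; exact ⟨Finset.union_subset hIX hJX, by rwa [h2]⟩
      · left; exact ⟨(Finset.inter_subset_left).trans hIX, by rwa [h1]⟩
  · ext J
    simp only [Set.mem_inter_iff, Set.mem_empty_iff_false, iff_false, not_and]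
    rintro hJS ⟨hJX, hJ'⟩
    obtain ⟨_, hne, hnX⟩ := hprop _ hJS
    rcases hclos _ hJS _ hJ' with h | h
    · obtain ⟨_, hne', _⟩ := hprop _ h
      exact hne' (by simp)
    · obtain ⟨_, _, hnX'⟩ := hprop _ h
      exact hnX' (by rw [Finset.union_sdiff_of_subset hJX])

end GRF
end

section
/- Let S be a precell associated to X. If K and L are disjoint sets with K ∪ L = J ∈ S, then K ∈ S or L ∈ S. -/
open scoped Classical

namespace GRF

variable {α : Type*} [DecidableEq α]

/-- If `K ∪ L = J ∈ S` with `K ∩ L = ∅` and `S` a precell, then `K ∈ S` or `L ∈ S`. -/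
theorem precell_split {α : Type*} [DecidableEq α] (X : Finset α) (hX : 2 ≤ X.card)
    (S : Set (Finset α)) (hS : IsPrecell X S)
    (K L J : Finset α) (hKL : K ∩ L = ∅) (hU : K ∪ L = J) (hJ : J ∈ S) :
    K ∈ S ∨ L ∈ S := by
  obtain ⟨⟨hne, hprop, hlat⟩, hpre⟩ := hS
  obtain ⟨hJX, hJne, hJX'⟩ := hprop J hJ
  by_cases hK0 : K = ∅
  · right
    subst hK0
    rw [show L = J by simpa using hU]
    exact hJ
  by_cases hL0 : L = ∅
  · left
    subst hL0
    rw [show K = J by simpa using hU]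
    exact hJ
  have hKJ : K ⊆ J := hU ▸ Finset.subset_union_left
  have hLJ : L ⊆ J := hU ▸ Finset.subset_union_right
  have hKX : K ⊆ X := hKJ.trans hJX
  have hLX : L ⊆ X := hLJ.trans hJX
  have hKprop : IsProperSubset X K := by
    refine ⟨hKX, hK0, ?_⟩
    rintro rfl
    exact hJX' (le_antisymm hJX hKJ)
  rcases hpre K hKprop with hKS | hKS
  · exact Or.inl hKS
  · -- X \ K ∈ S
    have hint : (X \ K) ∩ J = L := by
      rw [← hU]
      ext x
      simp only [Finset.mem_inter, Finset.mem_sdiff, Finset.mem_union]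
      constructor
      · rintro ⟨⟨-, hxK⟩, hx | hx⟩
        · exact absurd hx hxK
        · exact hx
      · intro hx
        have hxK : x ∉ K := fun hk => by
          have : x ∈ K ∩ L := Finset.mem_inter.2 ⟨hk, hx⟩
          simp [hKL] at this
        exact ⟨⟨hLX hx, hxK⟩, Or.inr hx⟩
    have huni : (X \ K) ∪ J = X := by
      apply le_antisymm
      · exact Finset.union_subset (Finset.sdiff_subset) hJX
      · intro x hx
        by_cases h : x ∈ K
        · exact Finset.mem_union.2 (Or.inr (hKJ h))
        · exact Finset.mem_union.2 (Or.inl (Finset.mem_sdiff.2 ⟨hx, h⟩))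
    rcases hlat (X \ K) hKS J hJ with h | h
    · right; rwa [hint] at h
    · rw [huni] at h
      exact absurd rfl (hprop X h).2.2

end GRF
end

section
/- Let S ⊆ P_*(X) satisfy: (i) J ∈ S implies X∖J ∉ S; (ii) J ∈ P_*(X) and J ∉ S implies X∖J ∈ S; (iii) J, K ∈ S with J∩K = ∅ implies J∪K ∈ S; (iv) J, K ∈ S with J∪K = X implies J∩K ∈ S. Then S and S' = {J : X∖J ∈ S} are opposite precells relative to X (in particular S is a paracell). -/
open scoped Classical

namespace GRF

variable {α : Type*} [DecidableEq α]

set_option maxHeartbeats 2000000 in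
/-- A subset of `P_*(X)` with properties (i)-(iv) is a precell with opposite precell
`S' = {J : X∖J ∈ S}`. -/
theorem precell_of_conditions {α : Type*} [DecidableEq α] (X : Finset α)
    (hX : 2 ≤ X.card) (S : Set (Finset α))
    (hsub : ∀ J ∈ S, IsProperSubset X J)
    (h1 : ∀ J ∈ S, X \ J ∉ S)
    (h2 : ∀ J : Finset α, IsProperSubset X J → J ∉ S → X \ J ∈ S)
    (h3 : ∀ J ∈ S, ∀ K ∈ S, J ∩ K = ∅ → J ∪ K ∈ S)
    (h4 : ∀ J ∈ S, ∀ K ∈ S, J ∪ K = X → J ∩ K ∈ S) :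
    IsPrecell X S ∧ IsPrecell X (opp X S) := by
  -- Closure of S: for I, J ∈ S, I ∩ J ∈ S or I ∪ J ∈ S.
  have hclose : ∀ I ∈ S, ∀ J ∈ S, I ∩ J ∈ S ∨ I ∪ J ∈ S := by
    intro I hI J hJ
    by_contra hc
    push_neg at hc
    obtain ⟨hIJ, hIJU⟩ := hc
    obtain ⟨hIsub, hIne, hInX⟩ := hsub I hI
    obtain ⟨hJsub, hJne, hJnX⟩ := hsub J hJ
    by_cases hcap : I ∩ J = ∅
    · exact hIJU (h3 I hI J hJ hcap)
    by_cases hcup : I ∪ J = X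
    · exact hIJ (h4 I hI J hJ hcup)
    have pcap : IsProperSubset X (I ∩ J) := by
      refine ⟨Finset.inter_subset_left.trans hIsub, hcap, ?_⟩
      intro h
      exact hInX (le_antisymm hIsub (h ▸ Finset.inter_subset_left))
    have pcup : IsProperSubset X (I ∪ J) := by
      refine ⟨Finset.union_subset hIsub hJsub, ?_, hcup⟩
      intro h
      exact hIne (Finset.union_eq_empty.mp h).1
    have hC1 : X \ (I ∩ J) ∈ S := h2 _ pcap hIJ
    have hC2 : X \ (I ∪ J) ∈ S := h2 _ pcup hIJU
    have hu1 : I ∪ (X \ (I ∩ J)) = X := by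
      ext a
      simp only [Finset.mem_union, Finset.mem_sdiff, Finset.mem_inter]
      have hIa : a ∈ I → a ∈ X := fun h => hIsub h
      tauto
    have hu2 : J ∪ (X \ (I ∩ J)) = X := by
      ext a
      simp only [Finset.mem_union, Finset.mem_sdiff, Finset.mem_inter]
      have hJa : a ∈ J → a ∈ X := fun h => hJsub h
      tauto
    have hd1 : I ∩ (X \ (I ∩ J)) = I \ J := by
      ext a
      simp only [Finset.mem_inter, Finset.mem_sdiff]
      have hIa : a ∈ I → a ∈ X := fun h => hIsub h
      tauto
    have hd2 : J ∩ (X \ (I ∩ J)) = J \ I := by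
      ext a
      simp only [Finset.mem_inter, Finset.mem_sdiff]
      have hJa : a ∈ J → a ∈ X := fun h => hJsub h
      tauto
    have hID : I \ J ∈ S := by
      have := h4 I hI _ hC1 hu1
      rwa [hd1] at this
    have hJD : J \ I ∈ S := by
      have := h4 J hJ _ hC1 hu2
      rwa [hd2] at this
    have hdisj : (I \ J) ∩ (J \ I) = ∅ := by
      ext a; simp only [Finset.mem_inter, Finset.mem_sdiff, Finset.notMem_empty]; tauto
    have hD : (I \ J) ∪ (J \ I) ∈ S := h3 _ hID _ hJD hdisj
    have hA : (X \ (I ∪ J)) ∪ I ∈ S := by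
      refine h3 _ hC2 I hI ?_
      ext a; simp only [Finset.mem_inter, Finset.mem_sdiff, Finset.mem_union,
        Finset.notMem_empty]; tauto
    have hB : (X \ (I ∪ J)) ∪ J ∈ S := by
      refine h3 _ hC2 J hJ ?_
      ext a; simp only [Finset.mem_inter, Finset.mem_sdiff, Finset.mem_union,
        Finset.notMem_empty]; tauto
    have hAB : ((X \ (I ∪ J)) ∪ I) ∪ ((X \ (I ∪ J)) ∪ J) = X := by
      ext a
      simp only [Finset.mem_union, Finset.mem_sdiff]
      have hIa : a ∈ I → a ∈ X := fun h => hIsub h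
      have hJa : a ∈ J → a ∈ X := fun h => hJsub h
      tauto
    have hCmem : ((X \ (I ∪ J)) ∪ I) ∩ ((X \ (I ∪ J)) ∪ J) ∈ S := h4 _ hA _ hB hAB
    have hEq : ((X \ (I ∪ J)) ∪ I) ∩ ((X \ (I ∪ J)) ∪ J) = X \ ((I \ J) ∪ (J \ I)) := by
      ext a
      simp only [Finset.mem_inter, Finset.mem_union, Finset.mem_sdiff]
      have hIa : a ∈ I → a ∈ X := fun h => hIsub h
      have hJa : a ∈ J → a ∈ X := fun h => hJsub h
      tauto
    rw [hEq] at hCmem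
    exact h1 _ hD hCmem
  -- S is nonempty
  have hSne : S.Nonempty := by
    obtain ⟨x, hx⟩ := Finset.card_pos.mp (by omega : 0 < X.card)
    have hprop : IsProperSubset X {x} := by
      refine ⟨Finset.singleton_subset_iff.mpr hx, Finset.singleton_ne_empty x, ?_⟩
      intro h
      have := h ▸ hX
      simp at this
    by_cases hmem : {x} ∈ S
    · exact ⟨_, hmem⟩
    · exact ⟨_, h2 _ hprop hmem⟩
  have hSpre : IsPrecell X S := by
    refine ⟨⟨hSne, hsub, hclose⟩, ?_⟩
    intro J hJ
    by_cases hmem : J ∈ S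
    · exact Or.inl hmem
    · exact Or.inr (h2 _ hJ hmem)
  refine ⟨hSpre, ?_⟩
  -- properties of the opposite set
  have hsub' : ∀ J ∈ opp X S, IsProperSubset X J := by
    rintro J ⟨hJX, hJS⟩
    obtain ⟨h1', h2', h3'⟩ := hsub _ hJS
    refine ⟨hJX, ?_, ?_⟩
    · intro h
      apply h3'
      simpa [h] using rfl
    · intro h
      apply h2'
      simp [h]
  have hcompl : ∀ J : Finset α, J ⊆ X → X \ (X \ J) = J := fun J hJ =>
    Finset.sdiff_sdiff_eq_self hJ
  refine ⟨⟨?_, hsub', ?_⟩, ?_⟩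
  · obtain ⟨J, hJ⟩ := hSne
    refine ⟨X \ J, Finset.sdiff_subset, ?_⟩
    rw [hcompl J (hsub J hJ).1]
    exact hJ
  · rintro I ⟨hIX, hIS⟩ J ⟨hJX, hJS⟩
    have h := hclose _ hIS _ hJS
    rcases h with h | h
    · right
      refine ⟨Finset.union_subset hIX hJX, ?_⟩
      have he : X \ (I ∪ J) = (X \ I) ∩ (X \ J) := by
        ext a
        simp only [Finset.mem_inter, Finset.mem_sdiff, Finset.mem_union]
        tauto
      rwa [he]
    · left
      refine ⟨Finset.inter_subset_left.trans hIX, ?_⟩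
      have he : X \ (I ∩ J) = (X \ I) ∪ (X \ J) := by
        ext a
        simp only [Finset.mem_inter, Finset.mem_sdiff, Finset.mem_union]
        tauto
      rwa [he]
  · intro J hJ
    have hJX := hJ.1
    have hXJ : IsProperSubset X (X \ J) := by
      refine ⟨Finset.sdiff_subset, ?_, ?_⟩
      · intro h
        exact hJ.2.2 (le_antisymm hJX (by
          intro a ha
          by_contra haJ
          exact (Finset.eq_empty_iff_forall_notMem.mp h a) (Finset.mem_sdiff.mpr ⟨ha, haJ⟩)))
      · intro h
        obtain ⟨a, ha⟩ := Finset.nonempty_iff_ne_empty.mpr hJ.2.1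
        have haX : a ∈ X := hJX ha
        rw [← h] at haX
        exact (Finset.mem_sdiff.mp haX).2 ha
    by_cases hmem : X \ J ∈ S
    · exact Or.inl ⟨hJX, hmem⟩
    · exact Or.inr ⟨Finset.sdiff_subset, h2 _ hXJ hmem⟩


end GRF
end

section
/- Let Y and X be disjoint nonempty finite sets, and let S and S' be opposite paracells associated to X. Then Y↓S = {J ∈ P_*(Y∪X) : J∩X = X or J∩X ∈ S} and Y↑S' = {J ∈ P_*(Y∪X) : J∩X = ∅ or J∩X ∈ S'} are opposite paracells associated to Y∪X. Moreover, if S and S' are opposite precells (respectively cells), then Y↓S and Y↑S' are opposite precells (respectively cells). -/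
open scoped Classical

namespace GRF

variable {α : Type*} [DecidableEq α]

lemma proper_sdiff {Z J : Finset α} (h : IsProperSubset Z J) :
    IsProperSubset Z (Z \ J) := by
  obtain ⟨hsub, hne, hnZ⟩ := h
  refine ⟨Finset.sdiff_subset, ?_, ?_⟩
  · intro h0
    apply hnZ
    apply Finset.Subset.antisymm hsub
    intro x hx
    by_contra hxJ
    have hx' : x ∈ Z \ J := Finset.mem_sdiff.mpr ⟨hx, hxJ⟩
    simp [h0] at hx'
  · intro hZ
    obtain ⟨x, hx⟩ := Finset.nonempty_iff_ne_empty.mpr hne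
    have hx2 : x ∈ Z \ J := by rw [hZ]; exact hsub hx
    exact (Finset.mem_sdiff.mp hx2).2 hx

lemma proper_of_sdiff {Z J : Finset α} (hJZ : J ⊆ Z)
    (h : IsProperSubset Z (Z \ J)) : IsProperSubset Z J := by
  have h2 := proper_sdiff h
  rwa [Finset.sdiff_sdiff_eq_self hJZ] at h2

lemma opp_paracell_s9 {Z : Finset α} {T : Set (Finset α)} (h : IsParacell Z T) :
    IsParacell Z (opp Z T) := by
  obtain ⟨⟨J0, hJ0⟩, hprop, hclose⟩ := h
  refine ⟨⟨Z \ J0, Finset.sdiff_subset, ?_⟩, ?_, ?_⟩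
  · rwa [Finset.sdiff_sdiff_eq_self (hprop J0 hJ0).1]
  · rintro J ⟨hJZ, hJT⟩
    exact proper_of_sdiff hJZ (hprop _ hJT)
  · rintro I ⟨hIZ, hIT⟩ J ⟨hJZ, hJT⟩
    have e1 : Z \ I ∩ (Z \ J) = Z \ (I ∪ J) := by ext x; simp; tauto
    have e2 : Z \ I ∪ Z \ J = Z \ (I ∩ J) := by ext x; simp; tauto
    rcases hclose _ hIT _ hJT with h1 | h1
    · right
      exact ⟨Finset.union_subset hIZ hJZ, by rwa [e1] at h1⟩
    · left
      exact ⟨Finset.inter_subset_left.trans hIZ, by rwa [e2] at h1⟩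

lemma opp_precell {Z : Finset α} {T : Set (Finset α)} (h : IsPrecell Z T) :
    IsPrecell Z (opp Z T) := by
  obtain ⟨hpc, hdi⟩ := h
  refine ⟨opp_paracell_s9 hpc, fun J hJ => ?_⟩
  rcases hdi (Z \ J) (proper_sdiff hJ) with h1 | h1
  · left; exact ⟨hJ.1, h1⟩
  · right
    refine ⟨Finset.sdiff_subset, ?_⟩
    rwa [Finset.sdiff_sdiff_eq_self hJ.1] at h1 ⊢

lemma opp_cell {Z : Finset α} {T : Set (Finset α)} (h : IsCell Z T) :
    IsCell Z (opp Z T) := by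
  obtain ⟨hpre, s, hsum, hpos⟩ := h
  refine ⟨opp_precell hpre, fun j => -s j, by simp [hsum], ?_⟩
  rintro J ⟨hJZ, hJT⟩
  have h1 := hpos _ hJT
  rw [Finset.sum_sdiff_eq_sub hJZ, hsum] at h1
  simp only [Finset.sum_neg_distrib]
  linarith

/-- `Y↓S` and `Y↑S'` are opposite paracells associated to `Y ∪ X`; moreover they are
precells (resp. cells) whenever `S` is. -/
theorem down_up_paracell {α : Type*} [DecidableEq α] (Y X : Finset α)
    (hY : Y.Nonempty) (hX : X.Nonempty) (hd : Disjoint Y X)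
    (S : Set (Finset α)) (hS : IsParacell X S) :
    (IsParacell (Y ∪ X) (cellDown Y X S) ∧
      cellUp Y X (opp X S) = opp (Y ∪ X) (cellDown Y X S)) ∧
    (IsPrecell X S →
      IsPrecell (Y ∪ X) (cellDown Y X S) ∧ IsPrecell (Y ∪ X) (cellUp Y X (opp X S))) ∧
    (IsCell X S →
      IsCell (Y ∪ X) (cellDown Y X S) ∧ IsCell (Y ∪ X) (cellUp Y X (opp X S))) := by
  classical
  have hXZ : X ⊆ Y ∪ X := Finset.subset_union_right
  have hYZ : Y ⊆ Y ∪ X := Finset.subset_union_left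
  obtain ⟨⟨J0, hJ0⟩, hSprop, hSclose⟩ := hS
  have hXneZ : X ≠ Y ∪ X := by
    intro h
    obtain ⟨y, hy⟩ := hY
    have hy2 : y ∈ X := by rw [h]; exact hYZ hy
    exact (Finset.disjoint_left.mp hd hy) hy2
  have hinterX : ∀ J : Finset α, (Y ∪ X) \ J ∩ X = X \ J := by
    intro J
    ext x
    simp only [Finset.mem_inter, Finset.mem_sdiff, Finset.mem_union]
    tauto
  have e3 : ∀ J : Finset α, X \ (J ∩ X) = X \ J := by
    intro J; ext x; simp only [Finset.mem_sdiff, Finset.mem_inter, not_and]; tauto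
  have ne_of_sub : ∀ {A B : Finset α}, A.Nonempty → A ⊆ B → B ≠ ∅ := by
    rintro A B ⟨x, hx⟩ hAB h
    rw [h] at hAB
    simpa using hAB hx
  -- Part A : paracell
  have hA : IsParacell (Y ∪ X) (cellDown Y X S) := by
    refine ⟨⟨J0, ?_, ?_⟩, fun J hJ => hJ.1, ?_⟩
    · obtain ⟨h1, h2, h3⟩ := hSprop J0 hJ0
      exact ⟨h1.trans hXZ, h2, fun h => hXneZ (Finset.Subset.antisymm hXZ (h ▸ h1))⟩
    · exact Or.inr (by rw [Finset.inter_eq_left.mpr (hSprop J0 hJ0).1]; exact hJ0)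
    · rintro I ⟨hIp, hI⟩ J ⟨hJp, hJ⟩
      have hIJZ : I ∩ J ⊆ Y ∪ X := Finset.inter_subset_left.trans hIp.1
      have hUZ : I ∪ J ⊆ Y ∪ X := Finset.union_subset hIp.1 hJp.1
      have hInterNeZ : I ∩ J ≠ Y ∪ X := by
        intro h
        exact hIp.2.2 (Finset.Subset.antisymm hIp.1 (h ▸ Finset.inter_subset_left))
      have hIX : (I ∩ J) ∩ X = (I ∩ X) ∩ (J ∩ X) := by
        ext x; simp only [Finset.mem_inter]; tauto
      have hUX : (I ∪ J) ∩ X = (I ∩ X) ∪ (J ∩ X) := by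
        ext x; simp only [Finset.mem_inter, Finset.mem_union]; tauto
      rcases hI with hI | hI <;> rcases hJ with hJ | hJ
      · left
        refine ⟨⟨hIJZ, ?_, hInterNeZ⟩, Or.inl (by rw [hIX, hI, hJ, Finset.inter_self])⟩
        have hXI : X ⊆ I := Finset.inter_eq_right.mp hI
        have hXJ : X ⊆ J := Finset.inter_eq_right.mp hJ
        exact ne_of_sub hX (Finset.subset_inter hXI hXJ)
      · left
        have hsubIJ : J ∩ X ⊆ I ∩ J :=
          Finset.subset_inter (Finset.inter_subset_right.trans (Finset.inter_eq_right.mp hI))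
            Finset.inter_subset_left
        refine ⟨⟨hIJZ, ?_, hInterNeZ⟩, Or.inr ?_⟩
        · exact ne_of_sub (Finset.nonempty_iff_ne_empty.mpr (hSprop _ hJ).2.1) hsubIJ
        · rw [hIX, hI]
          rw [Finset.inter_eq_right.mpr Finset.inter_subset_right]
          exact hJ
      · left
        have hsubIJ : I ∩ X ⊆ I ∩ J :=
          Finset.subset_inter Finset.inter_subset_left
            (Finset.inter_subset_right.trans (Finset.inter_eq_right.mp hJ))
        refine ⟨⟨hIJZ, ?_, hInterNeZ⟩, Or.inr ?_⟩
        · exact ne_of_sub (Finset.nonempty_iff_ne_empty.mpr (hSprop _ hI).2.1) hsubIJ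
        · rw [hIX, hJ]
          rw [Finset.inter_eq_left.mpr Finset.inter_subset_right]
          exact hI
      · rcases hSclose _ hI _ hJ with h1 | h1
        · left
          have hsubIJ : (I ∩ X) ∩ (J ∩ X) ⊆ I ∩ J :=
            Finset.inter_subset_inter Finset.inter_subset_left Finset.inter_subset_left
          refine ⟨⟨hIJZ, ?_, hInterNeZ⟩, Or.inr (by rw [hIX]; exact h1)⟩
          exact ne_of_sub (Finset.nonempty_iff_ne_empty.mpr (hSprop _ h1).2.1) hsubIJ
        · right
          refine ⟨⟨hUZ, ?_, ?_⟩, Or.inr (by rw [hUX]; exact h1)⟩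
          · intro h
            exact hIp.2.1 (Finset.union_eq_empty.mp h).1
          · intro h
            apply (hSprop _ h1).2.2
            rw [← hUX, h]
            exact Finset.inter_eq_right.mpr hXZ
  -- Part B : opposites
  have hB : cellUp Y X (opp X S) = opp (Y ∪ X) (cellDown Y X S) := by
    ext J
    simp only [cellUp, cellDown, opp, Set.mem_setOf_eq]
    constructor
    · rintro ⟨hJp, hcond⟩
      refine ⟨hJp.1, proper_sdiff hJp, ?_⟩
      rw [hinterX J]
      rcases hcond with h | ⟨_, hmem⟩
      · left
        rw [← e3 J, h, Finset.sdiff_empty]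
      · right
        rwa [e3] at hmem
    · rintro ⟨hJZ, hKp, hcond⟩
      refine ⟨proper_of_sdiff hJZ hKp, ?_⟩
      rw [hinterX J] at hcond
      rcases hcond with h | h
      · left
        have hdj : Disjoint X J := Finset.sdiff_eq_self_iff_disjoint.mp h
        exact Finset.disjoint_iff_inter_eq_empty.mp hdj.symm
      · right
        exact ⟨Finset.inter_subset_right, by rwa [e3]⟩
  -- Part C : precell
  have hC : IsPrecell X S → IsPrecell (Y ∪ X) (cellDown Y X S) := by
    rintro ⟨_, hdi⟩
    refine ⟨hA, fun J hJp => ?_⟩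
    by_cases h1 : J ∩ X = X
    · left; exact ⟨hJp, Or.inl h1⟩
    by_cases h2 : J ∩ X = ∅
    · right
      refine ⟨proper_sdiff hJp, Or.inl ?_⟩
      rw [hinterX J, ← e3 J, h2, Finset.sdiff_empty]
    · rcases hdi (J ∩ X) ⟨Finset.inter_subset_right, h2, h1⟩ with h | h
      · left; exact ⟨hJp, Or.inr h⟩
      · right
        refine ⟨proper_sdiff hJp, Or.inr ?_⟩
        rw [hinterX J, ← e3 J]; exact h
  -- Part D : cell
  have hD : IsCell X S → IsCell (Y ∪ X) (cellDown Y X S) := by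
    rintro ⟨hpre, s, hsum, hpos⟩
    set T : Finset (Finset α) := X.powerset.filter (fun J => J ∈ S) with hT
    have hTne : T.Nonempty :=
      ⟨J0, by simp [hT, Finset.mem_powerset, (hSprop J0 hJ0).1, hJ0]⟩
    set m : ℝ := T.inf' hTne (fun J => ∑ j ∈ J, s j) with hm
    have hmpos : 0 < m := by
      rw [hm, Finset.lt_inf'_iff]
      intro J hJ
      simp only [hT, Finset.mem_filter, Finset.mem_powerset] at hJ
      exact hpos J hJ.2
    have hmle : ∀ a ∈ S, a ⊆ X → m ≤ ∑ j ∈ a, s j := fun a ha hsub =>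
      Finset.inf'_le _ (by simp [hT, Finset.mem_powerset, hsub, ha])
    set K : ℝ := (X.card : ℝ) / m with hK
    set t : α → ℝ :=
      fun j => if j ∈ X then K * s j + 1 else -((X.card : ℝ) / (Y.card : ℝ)) with ht
    have hYc : (0:ℝ) < Y.card := by exact_mod_cast Finset.card_pos.mpr hY
    have hXc : (0:ℝ) < X.card := by exact_mod_cast Finset.card_pos.mpr hX
    have hY0 : (Y.card : ℝ) ≠ 0 := ne_of_gt hYc
    have hsumX : ∀ A : Finset α, A ⊆ X →
        ∑ j ∈ A, t j = K * (∑ j ∈ A, s j) + A.card := by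
      intro A hA
      have h1 : ∑ j ∈ A, t j = ∑ j ∈ A, (K * s j + 1) :=
        Finset.sum_congr rfl fun j hj => by rw [ht]; simp [hA hj]
      rw [h1, Finset.sum_add_distrib, Finset.mul_sum]
      simp
    have hsumY : ∀ A : Finset α, A ⊆ Y →
        ∑ j ∈ A, t j = -((A.card : ℝ) * ((X.card : ℝ) / Y.card)) := by
      intro A hA
      have h1 : ∑ j ∈ A, t j = ∑ _j ∈ A, (-((X.card : ℝ) / (Y.card : ℝ))) :=
        Finset.sum_congr rfl fun j hj => by
          rw [ht]; simp [Finset.disjoint_left.mp hd (hA hj)]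
      rw [h1, Finset.sum_const, nsmul_eq_mul]
      ring
    have htot : ∑ j ∈ Y ∪ X, t j = 0 := by
      rw [Finset.sum_union hd, hsumY Y (subset_refl Y), hsumX X (subset_refl X), hsum]
      field_simp
      ring
    refine ⟨hC hpre, t, htot, ?_⟩
    rintro J ⟨hJp, hcond⟩
    have hJY : Disjoint (J ∩ Y) (J ∩ X) :=
      hd.mono Finset.inter_subset_right Finset.inter_subset_right
    have hJu : J ∩ Y ∪ J ∩ X = J := by
      rw [← Finset.inter_union_distrib_left]
      exact Finset.inter_eq_left.mpr hJp.1
    have hsplit : ∑ j ∈ J, t j = ∑ j ∈ J ∩ Y, t j + ∑ j ∈ J ∩ X, t j := by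
      rw [← Finset.sum_union hJY, hJu]
    have eYX : (Y.card : ℝ) * ((X.card : ℝ) / Y.card) = X.card := by
      field_simp
    rcases hcond with h | h
    · have hne : J ∩ Y ≠ Y := by
        intro hEq
        apply hJp.2.2
        apply Finset.Subset.antisymm hJp.1
        apply Finset.union_subset
        · rw [← hEq]; exact Finset.inter_subset_left
        · rw [← h]; exact Finset.inter_subset_left
      have hcard : ((J ∩ Y).card : ℝ) < Y.card := by
        exact_mod_cast Finset.card_lt_card
          (HasSubset.Subset.ssubset_of_ne Finset.inter_subset_right hne)
      rw [hsplit, h, hsumX X (subset_refl X), hsum, hsumY _ Finset.inter_subset_right]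
      have h5 := mul_lt_mul_of_pos_right hcard (div_pos hXc hYc)
      rw [eYX] at h5
      linarith
    · have hle := hmle _ h Finset.inter_subset_right
      have hcard1 : (1:ℝ) ≤ ((J ∩ X).card : ℝ) := by
        have hne : (J ∩ X).Nonempty :=
          Finset.nonempty_iff_ne_empty.mpr (hSprop _ h).2.1
        exact_mod_cast Finset.card_pos.mpr hne
      have hYpart : -(X.card : ℝ) ≤ ∑ j ∈ J ∩ Y, t j := by
        rw [hsumY _ Finset.inter_subset_right]
        have hc : ((J ∩ Y).card : ℝ) ≤ Y.card := by
          exact_mod_cast Finset.card_le_card Finset.inter_subset_right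
        have h5 := mul_le_mul_of_nonneg_right hc (le_of_lt (div_pos hXc hYc))
        rw [eYX] at h5
        linarith
      rw [hsplit, hsumX _ Finset.inter_subset_right]
      have hKm : K * m = X.card := div_mul_cancel₀ _ (ne_of_gt hmpos)
      have hK0 : 0 ≤ K := div_nonneg hXc.le hmpos.le
      have h2 : K * m ≤ K * ∑ j ∈ J ∩ X, s j := mul_le_mul_of_nonneg_left hle hK0
      linarith
  refine ⟨⟨hA, hB⟩, fun hp => ⟨hC hp, ?_⟩, fun hc => ⟨hD hc, ?_⟩⟩
  · rw [hB]; exact opp_precell (hC hp)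
  · rw [hB]; exact opp_cell (hD hc)


end GRF
end

section
/- Let S' be a paracell in X and let I_1,...,I_N be an enumeration of all elements of S'. Then in the algebra A(X), the product (1−Î_1)···(1−Î_N) is independent of the chosen ordering: for every permutation π of (1,...,N), (1−Î_1)···(1−Î_N) = (1−Î_{π(1)})···(1−Î_{π(N)}). -/
open scoped Classical

namespace GRF

variable {α : Type*} [DecidableEq α]

/-! ### Auxiliary material for `prod_one_sub_hatI_perm` -/

section ListLemmas

variable {α : Type*} [DecidableEq α]

lemma filter_flatten_map_filter (g : Finset α → List (Finset α))
    (hg : ∀ y ∈ g ∅, y = ∅) (m : List (Finset α)) :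
    ((((m.filter fun J => J ≠ ∅).map g).flatten).filter fun J => J ≠ ∅)
      = (((m.map g).flatten).filter fun J => J ≠ ∅) := by
  induction m with
  | nil => rfl
  | cons x m ih =>
    by_cases hx : x = ∅
    · subst hx
      simp only [List.filter_cons, List.map_cons, List.flatten_cons, List.filter_append]
      rw [if_neg (by simp)]
      have h0 : (g ∅).filter (fun J => J ≠ ∅) = [] := by
        rw [List.filter_eq_nil_iff]
        intro y hy
        simp [hg y hy]
      rw [h0, List.nil_append, ih]
    · simp only [List.filter_cons, List.map_cons, List.flatten_cons, List.filter_append]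
      rw [if_pos (by simp [hx])]
      simp only [List.map_cons, List.flatten_cons, List.filter_append]
      rw [ih]

omit [DecidableEq α] in
lemma flatten_map_singleton (f : Finset α → Finset α) (m : List (Finset α)) :
    ((m.map fun x => [f x]).flatten) = m.map f := by
  induction m <;> simp_all

lemma filter_map_filter (f : Finset α → Finset α) (hf : f ∅ = ∅) (m : List (Finset α)) :
    (((m.filter fun J => J ≠ ∅).map f).filter fun J => J ≠ ∅)
      = ((m.map f).filter fun J => J ≠ ∅) := by
  have := filter_flatten_map_filter (fun x => [f x]) (by simp [hf]) m
  rwa [flatten_map_singleton, flatten_map_singleton] at this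

lemma seqMul_cons_right (a : List (Finset α)) (B : Finset α) (w : List (Finset α)) :
    seqMul a (B :: w) = ((a.map fun A => A ∩ B).filter fun J => J ≠ ∅) ++ seqMul a w := by
  simp [seqMul, List.filter_append]

lemma seqMul_append_right (a w1 w2 : List (Finset α)) :
    seqMul a (w1 ++ w2) = seqMul a w1 ++ seqMul a w2 := by
  simp [seqMul, List.filter_append]

lemma seqMul_filter_right (a m : List (Finset α)) :
    seqMul a (m.filter fun J => J ≠ ∅) = seqMul a m := by
  unfold seqMul
  exact filter_flatten_map_filter (fun B => a.map fun A => A ∩ B) (by simp) m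

lemma seqMul_assoc (a b c : List (Finset α)) :
    seqMul (seqMul a b) c = seqMul a (seqMul b c) := by
  induction c with
  | nil => rfl
  | cons C c ih =>
    rw [seqMul_cons_right, seqMul_cons_right, seqMul_append_right, ih]
    congr 1
    have h1 : ((seqMul a b).map fun A => A ∩ C).filter (fun J => J ≠ ∅)
        = (((b.map fun B => a.map fun A => A ∩ B).flatten).map fun A => A ∩ C).filter
            (fun J => J ≠ ∅) := by
      rw [seqMul, filter_map_filter (fun A => A ∩ C) (by simp)]
    rw [h1, seqMul_filter_right]
    simp [seqMul, List.map_flatten, List.map_map, Function.comp_def, Finset.inter_assoc]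

/-- Members of `seqMul a b` are nonempty intersections. -/
lemma mem_seqMul {a b : List (Finset α)} {E : Finset α} (h : E ∈ seqMul a b) :
    E ≠ ∅ ∧ ∃ A ∈ a, ∃ B ∈ b, E = A ∩ B := by
  unfold seqMul at h
  rw [List.mem_filter] at h
  obtain ⟨h1, h2⟩ := h
  rw [List.mem_flatten] at h1
  obtain ⟨L, hL, hE⟩ := h1
  rw [List.mem_map] at hL
  obtain ⟨B, hB, rfl⟩ := hL
  rw [List.mem_map] at hE
  obtain ⟨A, hA, rfl⟩ := hE
  exact ⟨by simpa using h2, A, hA, B, hB, rfl⟩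

end ListLemmas

section Algebra

variable {α : Type*} [DecidableEq α]

noncomputable instance : Semigroup (List (Finset α)) where
  mul := seqMul
  mul_assoc := seqMul_assoc

/-- `A(X)` viewed as the (nonunital) monoid algebra on the semigroup of sequences. -/
noncomputable abbrev MA (α : Type*) [DecidableEq α] := MonoidAlgebra ℂ (List (Finset α))

lemma amul_eq_mul (x y : AX α) :
    amul x y = ((MonoidAlgebra.ofCoeff x : MA α) * MonoidAlgebra.ofCoeff y).coeff := by
  rw [MonoidAlgebra.mul_def, amul]
  simp only [← MonoidAlgebra.ofCoeff_single, ← MonoidAlgebra.ofCoeff_finsuppSum]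
  rfl

/-- Shorthand for the monoid-algebra product on `AX`. -/
noncomputable def mm (x y : AX α) : AX α :=
  ((MonoidAlgebra.ofCoeff x : MA α) * MonoidAlgebra.ofCoeff y).coeff

lemma amul_eq_mm (x y : AX α) : amul x y = mm x y := amul_eq_mul x y

lemma mm_assoc (x y z : AX α) : mm (mm x y) z = mm x (mm y z) :=
  congrArg MonoidAlgebra.coeff (mul_assoc (G := MA α) (.ofCoeff x) (.ofCoeff y) (.ofCoeff z))

lemma mm_sub_right (x y z : AX α) : mm x (y - z) = mm x y - mm x z :=
  congrArg MonoidAlgebra.coeff (mul_sub (α := MA α) (.ofCoeff x) (.ofCoeff y) (.ofCoeff z))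

lemma mm_sub_left (x y z : AX α) : mm (x - y) z = mm x z - mm y z :=
  congrArg MonoidAlgebra.coeff (sub_mul (α := MA α) (.ofCoeff x) (.ofCoeff y) (.ofCoeff z))

lemma mm_single_single (a b : List (Finset α)) (ca cb : ℂ) :
    mm (Finsupp.single a ca) (Finsupp.single b cb) = Finsupp.single (seqMul a b) (ca * cb) :=
  congrArg MonoidAlgebra.coeff (MonoidAlgebra.single_mul_single (R := ℂ) a b ca cb)

end Algebra
section Kill

variable {α : Type*} [DecidableEq α]

/-- Blocks of `c` are nonempty subsets of `X`, each contained in `K` or disjoint from it. -/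
def GoodL (X K : Finset α) (c : List (Finset α)) : Prop :=
  ∀ B ∈ c, B ≠ ∅ ∧ B ⊆ X ∧ (B ⊆ K ∨ B ∩ K = ∅)

lemma seqMul_oneX_fix {X : Finset α} {c : List (Finset α)}
    (h : ∀ B ∈ c, B ≠ ∅ ∧ B ⊆ X) : seqMul [X] c = c := by
  induction c with
  | nil => rfl
  | cons B w ih =>
    rw [seqMul_cons_right]
    have hB := h B (by simp)
    have hw : seqMul [X] w = w := ih fun B hB => h B (by simp [hB])
    rw [hw]
    simp only [List.map_cons, List.map_nil, List.filter_cons]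
    rw [Finset.inter_comm, Finset.inter_eq_left.mpr hB.2, if_pos (by simp [hB.1])]
    rfl

lemma seqMul_hat_fix {X K : Finset α} {c : List (Finset α)}
    (h : GoodL X K c) : seqMul [K, X \ K] c = c := by
  induction c with
  | nil => rfl
  | cons B w ih =>
    rw [seqMul_cons_right]
    obtain ⟨hBne, hBX, hBK⟩ := h B (by simp)
    have hw : seqMul [K, X \ K] w = w := ih fun B hB => h B (by simp [hB])
    rw [hw]
    simp only [List.map_cons, List.map_nil, List.filter_cons]
    rcases hBK with hBK | hBK
    · have h1 : K ∩ B = B := Finset.inter_eq_right.mpr hBK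
      have h2 : (X \ K) ∩ B = ∅ := by
        rw [← Finset.disjoint_iff_inter_eq_empty]
        exact Finset.sdiff_disjoint.mono_right hBK
      rw [h1, h2, if_pos (by simp [hBne]), if_neg (by simp)]
      rfl
    · have h1 : K ∩ B = ∅ := by rw [Finset.inter_comm]; exact hBK
      have h2 : (X \ K) ∩ B = B := by
        refine Finset.inter_eq_right.mpr (Finset.subset_sdiff.mpr ⟨hBX, ?_⟩)
        exact Finset.disjoint_iff_inter_eq_empty.mpr hBK
      rw [h1, h2, if_neg (by simp), if_pos (by simp [hBne])]
      rfl

/-- `z` has all support sequences `Good`. -/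
def GoodSupp (X K : Finset α) (z : AX α) : Prop := ∀ c ∈ z.support, GoodL X K c

lemma support_mm_subset {x z : AX α} {c : List (Finset α)} (hc : c ∈ (mm x z).support) :
    ∃ a ∈ x.support, ∃ b ∈ z.support, c = seqMul a b := by
  rw [← amul_eq_mm, amul] at hc
  have h1 := Finsupp.support_sum hc
  rw [Finset.mem_biUnion] at h1
  obtain ⟨a, ha, h2⟩ := h1
  have h3 := Finsupp.support_sum h2
  rw [Finset.mem_biUnion] at h3
  obtain ⟨b, hb, h4⟩ := h3
  have h5 := Finsupp.support_single_subset h4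
  rw [Finset.mem_singleton] at h5
  exact ⟨a, ha, b, hb, h5⟩

lemma GoodL.seqMul_right {X K : Finset α} {a c : List (Finset α)} (h : GoodL X K c) :
    GoodL X K (seqMul a c) := by
  intro E hE
  obtain ⟨hEne, A, hA, B, hB, rfl⟩ := mem_seqMul hE
  obtain ⟨hBne, hBX, hBK⟩ := h B hB
  refine ⟨hEne, (Finset.inter_subset_right).trans hBX, ?_⟩
  rcases hBK with hBK | hBK
  · exact Or.inl ((Finset.inter_subset_right).trans hBK)
  · refine Or.inr (Finset.subset_empty.mp ?_)
    rw [← hBK]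
    exact Finset.inter_subset_inter Finset.inter_subset_right le_rfl

lemma GoodL.seqMul_left {X K : Finset α} {a c : List (Finset α)} (h : GoodL X K a) :
    GoodL X K (seqMul a c) := by
  intro E hE
  obtain ⟨hEne, A, hA, B, hB, rfl⟩ := mem_seqMul hE
  obtain ⟨hAne, hAX, hAK⟩ := h A hA
  refine ⟨hEne, (Finset.inter_subset_left).trans hAX, ?_⟩
  rcases hAK with hAK | hAK
  · exact Or.inl ((Finset.inter_subset_left).trans hAK)
  · refine Or.inr (Finset.subset_empty.mp ?_)
    rw [← hAK]
    exact Finset.inter_subset_inter Finset.inter_subset_left le_rfl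

lemma GoodSupp.mm_left {X K : Finset α} {z : AX α} (h : GoodSupp X K z) (x : AX α) :
    GoodSupp X K (mm x z) := by
  intro c hc
  obtain ⟨a, _, b, hb, rfl⟩ := support_mm_subset hc
  exact (h b hb).seqMul_right

lemma GoodSupp.mm_right {X K : Finset α} {z : AX α} (h : GoodSupp X K z) (x : AX α) :
    GoodSupp X K (mm z x) := by
  intro c hc
  obtain ⟨a, ha, b, _, rfl⟩ := support_mm_subset hc
  exact (h a ha).seqMul_left

lemma single_one_mm {a : List (Finset α)} {z : AX α}
    (h : ∀ b ∈ z.support, seqMul a b = b) : mm (Finsupp.single a 1) z = z := by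
  rw [← amul_eq_mm, amul]
  rw [Finsupp.sum_single_index (by simp)]
  rw [Finsupp.sum_congr (g2 := fun b cb => Finsupp.single b cb)
      (fun b hb => by rw [h b hb, one_mul])]
  exact Finsupp.sum_single z

/-- The kill lemma: `(1 - K̂)` annihilates anything with `Good` support. -/
lemma one_sub_hat_mm_eq_zero {X K : Finset α} {z : AX α} (h : GoodSupp X K z) :
    mm (oneA X - hatI X K) z = 0 := by
  rw [mm_sub_left, oneA, hatI]
  rw [single_one_mm fun b hb => seqMul_oneX_fix fun B hB => ⟨(h b hb B hB).1, (h b hb B hB).2.1⟩]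
  rw [single_one_mm fun b hb => seqMul_hat_fix (h b hb)]
  exact sub_self z

end Kill
section Generators

variable {α : Type*} [DecidableEq α]

lemma sdiff_ne_empty_of_proper {X I : Finset α} (hI : IsProperSubset X I) : X \ I ≠ ∅ := by
  intro h
  exact hI.2.2 (le_antisymm hI.1 (Finset.sdiff_eq_empty_iff_subset.mp h))

lemma hat_blocks {X I : Finset α} (hI : IsProperSubset X I) :
    ∀ B ∈ [I, X \ I], B ≠ ∅ ∧ B ⊆ X := by
  intro B hB
  rcases List.mem_pair.mp hB with rfl | rfl
  · exact ⟨hI.2.1, hI.1⟩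
  · exact ⟨sdiff_ne_empty_of_proper hI, Finset.sdiff_subset⟩

lemma mm_one_one {X : Finset α} (hX : X ≠ ∅) : mm (oneA X) (oneA X) = oneA X := by
  rw [oneA, mm_single_single, mul_one]
  congr 1
  exact seqMul_oneX_fix (by simp [hX])

lemma mm_one_hat {X I : Finset α} (hI : IsProperSubset X I) :
    mm (oneA X) (hatI X I) = hatI X I := by
  rw [oneA, hatI, mm_single_single, mul_one]
  congr 1
  exact seqMul_oneX_fix (hat_blocks hI)

lemma mm_hat_one {X I : Finset α} (hI : IsProperSubset X I) :
    mm (hatI X I) (oneA X) = hatI X I := by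
  rw [oneA, hatI, mm_single_single, mul_one]
  congr 1
  rw [seqMul_cons_right]
  simp only [List.map_cons, List.map_nil, List.filter_cons, List.filter_nil]
  rw [Finset.inter_eq_left.mpr hI.1,
    Finset.inter_eq_left.mpr (Finset.sdiff_subset : X \ I ⊆ X)]
  rw [if_pos (by simp [hI.2.1]), if_pos (by simp [sdiff_ne_empty_of_proper hI])]
  rfl

lemma mm_hat_hat {X I J : Finset α} :
    mm (hatI X I) (hatI X J) = Finsupp.single (seqMul [I, X \ I] [J, X \ J]) 1 := by
  rw [hatI, hatI, mm_single_single, mul_one]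

/-- The commutator of `(1-Î)` and `(1-Ĵ)`. -/
lemma commutator_eq {X I J : Finset α} (hX : X ≠ ∅)
    (hI : IsProperSubset X I) (hJ : IsProperSubset X J) :
    mm (oneA X - hatI X I) (oneA X - hatI X J) - mm (oneA X - hatI X J) (oneA X - hatI X I)
      = Finsupp.single (seqMul [I, X \ I] [J, X \ J]) 1
        - Finsupp.single (seqMul [J, X \ J] [I, X \ I]) 1 := by
  rw [mm_sub_left, mm_sub_left, mm_sub_right, mm_sub_right, mm_sub_right, mm_sub_right]
  rw [mm_one_one hX, mm_one_hat hI, mm_one_hat hJ, mm_hat_one hI, mm_hat_one hJ,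
    mm_hat_hat, mm_hat_hat]
  abel

lemma inter_sdiff_right_eq {X I J : Finset α} (hJX : J ⊆ X) : (X \ I) ∩ J = J \ I := by
  ext x
  simp only [Finset.mem_inter, Finset.mem_sdiff]
  exact ⟨fun ⟨⟨_, h2⟩, h3⟩ => ⟨h3, h2⟩, fun ⟨h1, h2⟩ => ⟨⟨hJX h1, h2⟩, h1⟩⟩

lemma inter_sdiff_empty {X I J : Finset α} (hIJ : I ⊆ J) : I ∩ (X \ J) = ∅ := by
  rw [Finset.eq_empty_iff_forall_notMem]
  intro x hx
  rw [Finset.mem_inter, Finset.mem_sdiff] at hx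
  exact hx.2.2 (hIJ hx.1)

lemma cList_comm_of_subset {X I J : Finset α} (hI : IsProperSubset X I)
    (hJ : IsProperSubset X J) (hIJ : I ⊆ J) (hne : I ≠ J) :
    seqMul [I, X \ I] [J, X \ J] = seqMul [J, X \ J] [I, X \ I] := by
  have hJI : J \ I ≠ ∅ := by
    intro h
    exact hne (le_antisymm hIJ (Finset.sdiff_eq_empty_iff_subset.mp h))
  have hXJ : X \ J ≠ ∅ := sdiff_ne_empty_of_proper hJ
  rw [seqMul_cons_right, seqMul_cons_right, seqMul_cons_right, seqMul_cons_right,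
    seqMul, seqMul]
  simp only [List.map_cons, List.map_nil, List.filter_cons, List.filter_nil,
    List.flatten_nil, List.append_nil]
  rw [Finset.inter_eq_left.mpr hIJ, Finset.inter_comm J I, Finset.inter_eq_left.mpr hIJ]
  rw [inter_sdiff_right_eq hJ.1, Finset.inter_comm J (X \ I), inter_sdiff_right_eq hJ.1]
  rw [inter_sdiff_empty hIJ, Finset.inter_comm (X \ J) I, inter_sdiff_empty hIJ]
  rw [Finset.inter_eq_right.mpr (Finset.sdiff_subset_sdiff (le_refl X) hIJ),
    Finset.inter_comm (X \ J) (X \ I),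
    Finset.inter_eq_right.mpr (Finset.sdiff_subset_sdiff (le_refl X) hIJ)]
  simp [hI.2.1, hJI, hXJ]

/-- Comparable generators commute. -/
lemma mm_comm_of_subset {X I J : Finset α} (hX : X ≠ ∅) (hI : IsProperSubset X I)
    (hJ : IsProperSubset X J) (hcomp : I ⊆ J ∨ J ⊆ I) (hne : I ≠ J) :
    mm (oneA X - hatI X I) (oneA X - hatI X J)
      = mm (oneA X - hatI X J) (oneA X - hatI X I) := by
  rw [← sub_eq_zero, commutator_eq hX hI hJ]
  rcases hcomp with h | h
  · rw [cList_comm_of_subset hI hJ h hne, sub_self]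
  · rw [cList_comm_of_subset hJ hI h (Ne.symm hne), sub_self]

/-- The hat-product of `I` and `J` is `Good` for `K = I ∩ J` and for `K = I ∪ J`. -/
lemma goodL_hatProd {X I J K : Finset α} (hI : IsProperSubset X I)
    (hJ : IsProperSubset X J) (hK : K = I ∩ J ∨ K = I ∪ J) :
    GoodL X K (seqMul [I, X \ I] [J, X \ J]) := by
  intro E hE
  obtain ⟨hEne, A, hA, B, hB, rfl⟩ := mem_seqMul hE
  have hBX : B ⊆ X := (hat_blocks hJ B hB).2
  refine ⟨hEne, Finset.inter_subset_right.trans hBX, ?_⟩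
  rcases List.mem_pair.mp hA with rfl | rfl <;> rcases List.mem_pair.mp hB with rfl | rfl <;>
    rcases hK with rfl | rfl
  · exact Or.inl (Finset.subset_inter Finset.inter_subset_left Finset.inter_subset_right)
  · exact Or.inl (Finset.inter_subset_left.trans Finset.subset_union_left)
  · refine Or.inr (Finset.eq_empty_iff_forall_notMem.mpr fun x hx => ?_)
    simp only [Finset.mem_inter, Finset.mem_sdiff] at hx
    exact hx.1.2.2 hx.2.2
  · exact Or.inl (Finset.inter_subset_left.trans Finset.subset_union_left)
  · refine Or.inr (Finset.eq_empty_iff_forall_notMem.mpr fun x hx => ?_)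
    simp only [Finset.mem_inter, Finset.mem_sdiff] at hx
    exact hx.1.1.2 hx.2.1
  · exact Or.inl (Finset.inter_subset_right.trans Finset.subset_union_right)
  · refine Or.inr (Finset.eq_empty_iff_forall_notMem.mpr fun x hx => ?_)
    simp only [Finset.mem_inter, Finset.mem_sdiff] at hx
    exact hx.1.1.2 hx.2.1
  · refine Or.inr (Finset.eq_empty_iff_forall_notMem.mpr fun x hx => ?_)
    simp only [Finset.mem_inter, Finset.mem_sdiff, Finset.mem_union] at hx
    rcases hx.2 with h | h
    · exact hx.1.1.2 h
    · exact hx.1.2.2 h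

end Generators
section Swaps

variable {α : Type*} [DecidableEq α]

/-- The generator `1 - Î`. -/
noncomputable def xg (X I : Finset α) : AX α := oneA X - hatI X I

/-- The product of generators along `l`. -/
noncomputable def aprodm (X : Finset α) (l : List (Finset α)) : AX α :=
  aprod X (l.map fun I => oneA X - hatI X I)

lemma aprodm_cons {X A : Finset α} {w : List (Finset α)} :
    aprodm X (A :: w) = mm (xg X A) (aprodm X w) := by
  unfold aprodm aprod
  rw [List.map_cons, List.foldr_cons]
  exact amul_eq_mm _ _

lemma aprodm_append {X : Finset α} (u w : List (Finset α)) :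
    aprodm X (u ++ w) = u.foldr (fun A z => mm (xg X A) z) (aprodm X w) := by
  induction u with
  | nil => rfl
  | cons A u ih => rw [List.cons_append, aprodm_cons, ih, List.foldr_cons]

lemma foldr_mm_sub {X : Finset α} (u : List (Finset α)) (y z : AX α) :
    u.foldr (fun A t => mm (xg X A) t) y - u.foldr (fun A t => mm (xg X A) t) z
      = u.foldr (fun A t => mm (xg X A) t) (y - z) := by
  induction u with
  | nil => rfl
  | cons A u ih => rw [List.foldr_cons, List.foldr_cons, List.foldr_cons, ← mm_sub_right, ih]

lemma goodSupp_foldr {X K : Finset α} {y : AX α} (h : GoodSupp X K y)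
    (u : List (Finset α)) :
    GoodSupp X K (u.foldr (fun A t => mm (xg X A) t) y) := by
  induction u with
  | nil => exact h
  | cons A u ih => exact ih.mm_left _

lemma goodSupp_single_hatProd {X I J K : Finset α} (hI : IsProperSubset X I)
    (hJ : IsProperSubset X J) (hK : K = I ∩ J ∨ K = I ∪ J) :
    GoodSupp X K (Finsupp.single (seqMul [I, X \ I] [J, X \ J]) (1 : ℂ)) := by
  intro c hc
  have := Finsupp.support_single_subset hc
  rw [Finset.mem_singleton] at this
  subst this
  exact goodL_hatProd hI hJ hK

/-- Core computation: a factor `(1-K̂)` anywhere to the left lets us swap `I` and `J`. -/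
lemma swap_witness {X : Finset α} (hX : X ≠ ∅) {I J K : Finset α}
    (hI : IsProperSubset X I) (hJ : IsProperSubset X J)
    (hK : K = I ∩ J ∨ K = I ∪ J) (u1 u2 v : List (Finset α)) :
    aprodm X (u1 ++ K :: (u2 ++ I :: J :: v)) = aprodm X (u1 ++ K :: (u2 ++ J :: I :: v)) := by
  rw [aprodm_append, aprodm_append]
  congr 1
  rw [aprodm_cons, aprodm_cons, aprodm_append, aprodm_append,
    aprodm_cons, aprodm_cons, aprodm_cons, aprodm_cons]
  rw [← sub_eq_zero, ← mm_sub_right, foldr_mm_sub]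
  rw [← mm_assoc, ← mm_assoc, ← mm_sub_left]
  simp only [xg]
  rw [commutator_eq hX hI hJ]
  have hK' : K = J ∩ I ∨ K = J ∪ I := by
    rcases hK with h | h
    · exact Or.inl (by rw [h, Finset.inter_comm])
    · exact Or.inr (by rw [h, Finset.union_comm])
  have hgood : GoodSupp X K (mm (Finsupp.single (seqMul [I, X \ I] [J, X \ J]) 1
      - Finsupp.single (seqMul [J, X \ J] [I, X \ I]) 1) (aprodm X v)) := by
    refine GoodSupp.mm_right ?_ _
    intro c hc
    have := Finsupp.support_sub hc
    rw [Finset.mem_union] at this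
    rcases this with h | h
    · exact goodSupp_single_hatProd hI hJ hK c h
    · exact goodSupp_single_hatProd hJ hI hK' c h
  exact one_sub_hat_mm_eq_zero (goodSupp_foldr hgood u2)

/-- Adjacent comparable factors can be swapped. -/
lemma swap_comparable {X : Finset α} (hX : X ≠ ∅) {I J : Finset α}
    (hI : IsProperSubset X I) (hJ : IsProperSubset X J)
    (hcomp : I ⊆ J ∨ J ⊆ I) (hne : I ≠ J) (u v : List (Finset α)) :
    aprodm X (u ++ I :: J :: v) = aprodm X (u ++ J :: I :: v) := by
  rw [aprodm_append, aprodm_append]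
  congr 1
  rw [aprodm_cons, aprodm_cons, aprodm_cons, aprodm_cons, ← mm_assoc, ← mm_assoc]
  rw [show mm (xg X I) (xg X J) = mm (xg X J) (xg X I) from
    mm_comm_of_subset hX hI hJ hcomp hne]

/-- Moving an element leftwards over a block, given that short-suffix swaps are valid. -/
lemma move_left {X : Finset α} {l0 : List (Finset α)} {N : ℕ}
    (hswap : ∀ (u : List (Finset α)) (a b : Finset α) (v : List (Finset α)),
      (u ++ a :: b :: v).Perm l0 → v.length < N →
      aprodm X (u ++ a :: b :: v) = aprodm X (u ++ b :: a :: v)) :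
    ∀ (v1 u' : List (Finset α)) (K : Finset α) (v2 : List (Finset α)),
      v1.length + v2.length ≤ N → (u' ++ (v1 ++ K :: v2)).Perm l0 →
      aprodm X (u' ++ (v1 ++ K :: v2)) = aprodm X (u' ++ K :: (v1 ++ v2)) := by
  intro v1
  induction v1 with
  | nil => intro u' K v2 _ _; rfl
  | cons M v1 ih =>
    intro u' K v2 hlen hperm
    have h1 : u' ++ (M :: v1 ++ K :: v2) = (u' ++ [M]) ++ (v1 ++ K :: v2) := by simp
    have hperm1 : ((u' ++ [M]) ++ (v1 ++ K :: v2)).Perm l0 := by rw [← h1]; exact hperm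
    have hlen1 : v1.length + v2.length ≤ N := by
      simp only [List.length_cons] at hlen; omega
    rw [h1, ih (u' ++ [M]) K v2 hlen1 hperm1]
    have h2 : (u' ++ [M]) ++ K :: (v1 ++ v2) = u' ++ M :: K :: (v1 ++ v2) := by simp
    rw [h2]
    have hperm2 : (u' ++ M :: K :: (v1 ++ v2)).Perm l0 := by
      refine List.Perm.trans ?_ hperm
      refine List.Perm.append_left u' ?_
      exact (List.Perm.cons M List.perm_middle).symm
    have hlen2 : (v1 ++ v2).length < N := by
      simp only [List.length_cons] at hlen
      simp only [List.length_append]; omega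
    rw [hswap u' M K (v1 ++ v2) hperm2 hlen2]
    simp

end Swaps
section Main

variable {α : Type*} [DecidableEq α]

/-- Any adjacent transposition in an enumeration of a paracell preserves the product. -/
lemma swap_main {X : Finset α} (hX2 : 2 ≤ X.card) {S' : Set (Finset α)}
    (hS' : IsParacell X S') :
    ∀ (n : ℕ) (u : List (Finset α)) (I J : Finset α) (v : List (Finset α)),
      v.length ≤ n → (u ++ I :: J :: v).Nodup →
      (∀ A : Finset α, A ∈ u ++ I :: J :: v ↔ A ∈ S') →
      aprodm X (u ++ I :: J :: v) = aprodm X (u ++ J :: I :: v) := by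
  intro n
  induction n using Nat.strong_induction_on with
  | _ n ih =>
  intro u I J v hlen hnd hmem
  have hX : X ≠ ∅ := by
    intro h
    rw [h] at hX2
    simp at hX2
  have hIS : I ∈ S' := (hmem I).mp (by simp)
  have hJS : J ∈ S' := (hmem J).mp (by simp)
  have hI : IsProperSubset X I := hS'.2.1 I hIS
  have hJ : IsProperSubset X J := hS'.2.1 J hJS
  have hne : I ≠ J := by
    intro h
    subst h
    have : (I :: I :: v).Nodup := hnd.sublist (List.sublist_append_right u _)
    simp at this
  by_cases hcomp : I ⊆ J ∨ J ⊆ I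
  · exact swap_comparable hX hI hJ hcomp hne u v
  · push_neg at hcomp
    obtain ⟨K, hKS, hK⟩ : ∃ K, K ∈ S' ∧ (K = I ∩ J ∨ K = I ∪ J) := by
      rcases hS'.2.2 I hIS J hJS with h | h
      · exact ⟨_, h, Or.inl rfl⟩
      · exact ⟨_, h, Or.inr rfl⟩
    have hKnI : K ≠ I := by
      rintro rfl
      rcases hK with h | h
      · exact hcomp.1 (Finset.inter_eq_left.mp h.symm)
      · exact hcomp.2 (Finset.union_eq_left.mp h.symm)
    have hKnJ : K ≠ J := by
      rintro rfl
      rcases hK with h | h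
      · exact hcomp.2 (Finset.inter_eq_right.mp h.symm)
      · exact hcomp.1 (Finset.union_eq_right.mp h.symm)
    have hKmem : K ∈ u ++ I :: J :: v := (hmem K).mpr hKS
    rw [List.mem_append] at hKmem
    rcases hKmem with hKu | hKv
    · -- witness in the prefix
      obtain ⟨u1, u2, rfl⟩ := List.append_of_mem hKu
      have h1 : (u1 ++ K :: u2) ++ I :: J :: v = u1 ++ K :: (u2 ++ I :: J :: v) := by simp
      have h2 : (u1 ++ K :: u2) ++ J :: I :: v = u1 ++ K :: (u2 ++ J :: I :: v) := by simp
      rw [h1, h2]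
      exact swap_witness hX hI hJ hK u1 u2 v
    · -- witness in the suffix
      have hKv' : K ∈ v := by
        rcases List.mem_cons.mp hKv with h | h
        · exact absurd h hKnI
        rcases List.mem_cons.mp h with h' | h'
        · exact absurd h' hKnJ
        · exact h'
      obtain ⟨v1, v2, rfl⟩ := List.append_of_mem hKv'
      set l0 : List (Finset α) := u ++ I :: J :: (v1 ++ K :: v2) with hl0
      have hswap : ∀ (u' : List (Finset α)) (a b : Finset α) (v' : List (Finset α)),
          (u' ++ a :: b :: v').Perm l0 → v'.length < n →
          aprodm X (u' ++ a :: b :: v') = aprodm X (u' ++ b :: a :: v') := by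
        intro u' a b v' hperm hlt
        refine ih v'.length hlt u' a b v' le_rfl (hperm.symm.nodup hnd) fun A => ?_
        rw [hperm.mem_iff]
        exact hmem A
      have hK_proper : IsProperSubset X K := hS'.2.1 K hKS
      have hJKcomp : K ⊆ J ∨ J ⊆ K := by
        rcases hK with rfl | rfl
        · exact Or.inl Finset.inter_subset_right
        · exact Or.inr Finset.subset_union_right
      have hIKcomp : K ⊆ I ∨ I ⊆ K := by
        rcases hK with rfl | rfl
        · exact Or.inl Finset.inter_subset_left
        · exact Or.inr Finset.subset_union_left
      have hvlen : v1.length + v2.length ≤ n ∧ (v1 ++ v2).length < n := by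
        have := hlen
        simp only [List.length_append, List.length_cons] at this ⊢
        omega
      -- step 1: bring K to the head of the suffix
      have e1 : aprodm X (u ++ I :: J :: (v1 ++ K :: v2))
          = aprodm X (u ++ I :: J :: K :: (v1 ++ v2)) := by
        have h1 : u ++ I :: J :: (v1 ++ K :: v2) = (u ++ [I, J]) ++ (v1 ++ K :: v2) := by simp
        have h2 : (u ++ [I, J]) ++ K :: (v1 ++ v2) = u ++ I :: J :: K :: (v1 ++ v2) := by simp
        rw [h1, move_left hswap v1 (u ++ [I, J]) K v2 hvlen.1 (by rw [← h1]), h2]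
      -- step 2: commute K past J
      have e2 : aprodm X (u ++ I :: J :: K :: (v1 ++ v2))
          = aprodm X (u ++ I :: K :: J :: (v1 ++ v2)) := by
        have h1 : u ++ I :: J :: K :: (v1 ++ v2) = (u ++ [I]) ++ J :: K :: (v1 ++ v2) := by simp
        have h2 : (u ++ [I]) ++ K :: J :: (v1 ++ v2) = u ++ I :: K :: J :: (v1 ++ v2) := by simp
        rw [h1, swap_comparable hX hJ hK_proper hJKcomp.symm (Ne.symm hKnJ) (u ++ [I])
          (v1 ++ v2), h2]
      -- step 3: commute K past I
      have e3 : aprodm X (u ++ I :: K :: J :: (v1 ++ v2))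
          = aprodm X (u ++ K :: I :: J :: (v1 ++ v2)) :=
        swap_comparable hX hI hK_proper hIKcomp.symm (Ne.symm hKnI) u (J :: (v1 ++ v2))
      -- step 4: swap I and J behind the witness K
      have e4 : aprodm X (u ++ K :: I :: J :: (v1 ++ v2))
          = aprodm X (u ++ K :: J :: I :: (v1 ++ v2)) :=
        swap_witness hX hI hJ hK u [] (v1 ++ v2)
      -- step 5: commute K back past J
      have e5 : aprodm X (u ++ K :: J :: I :: (v1 ++ v2))
          = aprodm X (u ++ J :: K :: I :: (v1 ++ v2)) :=
        swap_comparable hX hK_proper hJ hJKcomp hKnJ u (I :: (v1 ++ v2))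
      -- step 6: commute K back past I
      have e6 : aprodm X (u ++ J :: K :: I :: (v1 ++ v2))
          = aprodm X (u ++ J :: I :: K :: (v1 ++ v2)) := by
        have h1 : u ++ J :: K :: I :: (v1 ++ v2) = (u ++ [J]) ++ K :: I :: (v1 ++ v2) := by simp
        have h2 : (u ++ [J]) ++ I :: K :: (v1 ++ v2) = u ++ J :: I :: K :: (v1 ++ v2) := by simp
        rw [h1, swap_comparable hX hK_proper hI hIKcomp hKnI (u ++ [J]) (v1 ++ v2), h2]
      -- step 7: move K back to its original position
      have e7 : aprodm X (u ++ J :: I :: (v1 ++ K :: v2))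
          = aprodm X (u ++ J :: I :: K :: (v1 ++ v2)) := by
        have h1 : u ++ J :: I :: (v1 ++ K :: v2) = (u ++ [J, I]) ++ (v1 ++ K :: v2) := by simp
        have h2 : (u ++ [J, I]) ++ K :: (v1 ++ v2) = u ++ J :: I :: K :: (v1 ++ v2) := by simp
        have hperm : ((u ++ [J, I]) ++ (v1 ++ K :: v2)).Perm l0 := by
          rw [← h1, hl0]
          exact List.Perm.append_left u (List.Perm.swap I J (v1 ++ K :: v2))
        rw [h1, move_left hswap v1 (u ++ [J, I]) K v2 hvlen.1 hperm, h2]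
      rw [e1, e2, e3, e4, e5, e6, ← e7]
  
end Main
section Chain

variable {α : Type*} [DecidableEq α]

/-- One adjacent transposition. -/
def AdjSwap (a b : List (Finset α)) : Prop :=
  ∃ u I J v, a = u ++ I :: J :: v ∧ b = u ++ J :: I :: v

lemma AdjSwap.perm {a b : List (Finset α)} (h : AdjSwap a b) : a.Perm b := by
  obtain ⟨u, I, J, v, rfl, rfl⟩ := h
  exact List.Perm.append_left u (List.Perm.swap J I v)

lemma rtg_adjSwap_cons {a b : List (Finset α)} (x : Finset α)
    (h : Relation.ReflTransGen AdjSwap a b) :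
    Relation.ReflTransGen AdjSwap (x :: a) (x :: b) := by
  induction h with
  | refl => exact Relation.ReflTransGen.refl
  | tail _ hstep ih =>
    refine ih.tail ?_
    obtain ⟨u, I, J, v, rfl, rfl⟩ := hstep
    exact ⟨x :: u, I, J, v, rfl, rfl⟩

lemma perm_rtg_adjSwap {l1 l2 : List (Finset α)} (h : l1.Perm l2) :
    Relation.ReflTransGen AdjSwap l1 l2 := by
  induction h with
  | nil => exact Relation.ReflTransGen.refl
  | cons x _ ih => exact rtg_adjSwap_cons x ih
  | swap x y l => exact Relation.ReflTransGen.single ⟨[], y, x, l, rfl, rfl⟩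
  | trans _ _ ih1 ih2 => exact ih1.trans ih2

lemma rtg_adjSwap_perm {a b : List (Finset α)}
    (h : Relation.ReflTransGen AdjSwap a b) : a.Perm b := by
  induction h with
  | refl => exact List.Perm.refl _
  | tail _ hstep ih => exact ih.trans hstep.perm

end Chain
/-- The product `(1−Î_1)⋯(1−Î_N)` over an enumeration of the paracell `S'` does not
depend on the chosen ordering. -/
theorem prod_one_sub_hatI_perm {α : Type*} [DecidableEq α] (X : Finset α)
    (hX : 2 ≤ X.card) (S' : Set (Finset α)) (hS' : IsParacell X S')
    (l1 l2 : List (Finset α)) (hnd : l1.Nodup)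
    (hmem : ∀ I : Finset α, I ∈ l1 ↔ I ∈ S')
    (hperm : l1.Perm l2) :
    aprod X (l1.map fun I => oneA X - hatI X I) =
      aprod X (l2.map fun I => oneA X - hatI X I) := by
  show aprodm X l1 = aprodm X l2
  have hrtg := perm_rtg_adjSwap hperm
  induction hrtg with
  | refl => rfl
  | @tail b c hab hstep ih =>
    have hpb : l1.Perm b := rtg_adjSwap_perm hab
    rw [ih hpb]
    obtain ⟨u, I, J, v, rfl, rfl⟩ := hstep
    refine swap_main hX hS' v.length u I J v le_rfl (hpb.nodup hnd) fun A => ?_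
    rw [← hpb.mem_iff]
    exact hmem A

end GRF
end

section
/- Let X = A ∪ B ∪ {1} with A, B, {1} pairwise disjoint and A, B nonempty, and let S, S' be opposite precells relative to X. Define (S‖1,A) = {J ∈ P_*(A∪{1}) : (J ⊆ A and J ∈ S) or (1 ∈ J and A∖J ∈ S')}, and (S'‖1,A) analogously with S and S' exchanged. Then (S‖1,A) and (S'‖1,A) are opposite precells relative to A∪{1}. Moreover, if S is a cell, then (S‖1,A) and (S'‖1,A) are cells. -/
open scoped Classical

namespace GRF

variable {α : Type*} [DecidableEq α]

section Aux

variable {X : Finset α} {S : Set (Finset α)}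

lemma proper_compl {J : Finset α} (h : IsProperSubset X J) :
    IsProperSubset X (X \ J) := by
  obtain ⟨hJX, hne, hnX⟩ := h
  refine ⟨Finset.sdiff_subset, ?_, ?_⟩
  · intro h0
    exact hnX (Finset.Subset.antisymm hJX (fun x hx => by
      by_contra hxJ
      have : x ∈ X \ J := Finset.mem_sdiff.mpr ⟨hx, hxJ⟩
      simp [h0] at this))
  · intro hXX
    obtain ⟨x, hx⟩ := Finset.nonempty_iff_ne_empty.mpr hne
    have hxX : x ∈ X := hJX hx
    have : x ∈ X \ J := by rw [hXX]; exact hxX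
    exact (Finset.mem_sdiff.mp this).2 hx

lemma compl_compl_of_subset {J : Finset α} (h : J ⊆ X) : X \ (X \ J) = J := by
  ext x
  simp only [Finset.mem_sdiff]
  constructor
  · rintro ⟨hx, h2⟩; by_contra hxJ; exact h2 ⟨hx, hxJ⟩
  · intro hx; exact ⟨h hx, fun h2 => h2.2 hx⟩

lemma mem_opp_of_mem (h : ∀ J ∈ S, IsProperSubset X J) {J : Finset α}
    (hJ : J ∈ S) : X \ J ∈ opp X S := by
  refine ⟨Finset.sdiff_subset, ?_⟩
  rw [compl_compl_of_subset (h J hJ).1]; exact hJ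

lemma opp_proper (h : ∀ J ∈ S, IsProperSubset X J) :
    ∀ J ∈ opp X S, IsProperSubset X J := by
  intro J hJ
  obtain ⟨hJX, hc⟩ := hJ
  have := proper_compl (h _ hc)
  rwa [compl_compl_of_subset hJX] at this

lemma opp_paracell_s15 (h : IsParacell X S) : IsParacell X (opp X S) := by
  obtain ⟨⟨J0, hJ0⟩, hprop, hclose⟩ := h
  refine ⟨⟨X \ J0, mem_opp_of_mem hprop hJ0⟩, opp_proper hprop, ?_⟩
  intro I hI J hJ
  obtain ⟨hIX, hIc⟩ := hI
  obtain ⟨hJX, hJc⟩ := hJ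
  have hint : X \ I ∩ (X \ J) = X \ (I ∪ J) := by
    ext x
    simp only [Finset.mem_inter, Finset.mem_sdiff, Finset.mem_union]
    tauto
  have huni : X \ I ∪ (X \ J) = X \ (I ∩ J) := by
    ext x
    simp only [Finset.mem_union, Finset.mem_sdiff, Finset.mem_inter]
    tauto
  rcases hclose _ hIc _ hJc with h1 | h1
  · right
    rw [hint] at h1
    exact ⟨Finset.union_subset hIX hJX, h1⟩
  · left
    rw [huni] at h1
    exact ⟨(Finset.inter_subset_left).trans hIX, h1⟩

lemma opp_precell_s15 (h : IsPrecell X S) : IsPrecell X (opp X S) := by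
  obtain ⟨hp, hdich⟩ := h
  refine ⟨opp_paracell_s15 hp, ?_⟩
  intro J hJ
  rcases hdich (X \ J) (proper_compl hJ) with h1 | h1
  · left; exact ⟨hJ.1, h1⟩
  · right
    rw [compl_compl_of_subset hJ.1] at h1
    exact ⟨Finset.sdiff_subset, by rwa [compl_compl_of_subset hJ.1]⟩

lemma opp_opp (h : ∀ J ∈ S, IsProperSubset X J) : opp X (opp X S) = S := by
  ext J
  constructor
  · rintro ⟨hJX, -, hc⟩
    rwa [compl_compl_of_subset hJX] at hc
  · intro hJ
    refine ⟨(h J hJ).1, Finset.sdiff_subset, ?_⟩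
    rwa [compl_compl_of_subset (h J hJ).1]

lemma opp_cell_s15 (h : IsCell X S) : IsCell X (opp X S) := by
  obtain ⟨hp, s, hsum, hpos⟩ := h
  refine ⟨opp_precell_s15 hp, fun j => -(s j), by simp [hsum], ?_⟩
  intro J hJ
  obtain ⟨hJX, hc⟩ := hJ
  have h1 : (0:ℝ) < ∑ j ∈ X \ J, s j := hpos _ hc
  have h2 : ∑ j ∈ X \ J, s j = ∑ j ∈ X, s j - ∑ j ∈ J, s j :=
    Finset.sum_sdiff_eq_sub hJX
  rw [hsum] at h2
  simp only [Finset.sum_neg_distrib]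
  linarith

end Aux

section Main

variable {A B : Finset α} {o : α} {S : Set (Finset α)}

/-- members of `opp X S` have nonempty complementary trace facts -/
lemma restCell_proper {J : Finset α} (hJ : J ∈ restCell A o S (opp (insert o (A ∪ B)) S)) :
    IsProperSubset (insert o A) J := hJ.1

lemma precell_restCell (hA : A.Nonempty) (hB : B.Nonempty) (hAB : Disjoint A B)
    (hoA : o ∉ A) (hoB : o ∉ B)
    (hS : IsPrecell (insert o (A ∪ B)) S) :
    IsPrecell (insert o A) (restCell A o S (opp (insert o (A ∪ B)) S)) := by
  set X := insert o (A ∪ B) with hXdef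
  have hAB' : ∀ x ∈ A, x ∉ B := fun x hx => Finset.disjoint_left.mp hAB hx
  have hAX : A ⊆ X := fun x hx => by simp [hXdef, hx]
  obtain ⟨⟨hSne, hSprop, hSclose⟩, hdich⟩ := hS
  obtain ⟨a0, ha0⟩ := id hA
  obtain ⟨b0, hb0⟩ := id hB
  -- S' basic facts
  have hS'prop := opp_proper (S := S) hSprop
  have hS'close := (opp_paracell_s15 ⟨hSne, hSprop, hSclose⟩).2.2
  -- key properness facts
  have hApr : IsProperSubset X A := by
    refine ⟨hAX, Finset.nonempty_iff_ne_empty.mp hA, ?_⟩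
    intro h
    have : b0 ∈ A := h ▸ (by simp [hXdef, hb0] : b0 ∈ X)
    exact hAB' b0 this hb0
  constructor
  · constructor
    -- Nonempty
    · rcases hdich A hApr with h1 | h1
      · refine ⟨A, ⟨⟨Finset.subset_insert _ _,
          Finset.nonempty_iff_ne_empty.mp hA, ?_⟩, Or.inl ⟨le_refl _, h1⟩⟩⟩
        intro h; exact hoA (h ▸ Finset.mem_insert_self o A)
      · refine ⟨{o}, ⟨⟨by simp, by simp, ?_⟩, Or.inr ⟨by simp, ?_⟩⟩⟩
        · intro h
          have : a0 ∈ ({o} : Finset α) := h ▸ Finset.mem_insert_of_mem ha0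
          simp at this
          exact hoA (this ▸ ha0)
        · have : A \ {o} = A := by
            ext x; simp only [Finset.mem_sdiff, Finset.mem_singleton]
            exact ⟨fun h => h.1, fun h => ⟨h, fun he => hoA (he ▸ h)⟩⟩
          rw [this]
          exact ⟨hAX, h1⟩
    constructor
    -- properness
    · intro J hJ; exact hJ.1
    -- closure
    · rintro I ⟨hIpr, hI⟩ J ⟨hJpr, hJ⟩
      have hIA1 := hIpr.1
      have hJA1 := hJpr.1
      -- helper: build membership for subsets of A
      have mkA : ∀ K : Finset α, K ⊆ A → K ∈ S →
          K ∈ restCell A o S (opp X S) := by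
        intro K hKA hKS
        refine ⟨⟨hKA.trans (Finset.subset_insert _ _), (hSprop K hKS).2.1, ?_⟩,
          Or.inl ⟨hKA, hKS⟩⟩
        intro h
        exact hoA (hKA (h ▸ Finset.mem_insert_self o A))
      -- helper: build membership for sets containing o
      have mkO : ∀ K : Finset α, K ⊆ insert o A → o ∈ K → A \ K ∈ opp X S →
          K ∈ restCell A o S (opp X S) := by
        intro K hKA1 hoK hK
        refine ⟨⟨hKA1, ?_, ?_⟩, Or.inr ⟨hoK, hK⟩⟩
        · intro h; rw [h] at hoK; simp at hoK
        · intro h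
          have hne : A \ K ≠ ∅ := (hS'prop _ hK).2.1
          obtain ⟨x, hx⟩ := Finset.nonempty_iff_ne_empty.mpr hne
          rw [Finset.mem_sdiff] at hx
          exact hx.2 (h ▸ Finset.mem_insert_of_mem hx.1)
      rcases hI with ⟨hIA, hIS⟩ | ⟨hoI, hIS'⟩
      · rcases hJ with ⟨hJA, hJS⟩ | ⟨hoJ, hJS'⟩
        · -- both in S, subsets of A
          rcases hSclose _ hIS _ hJS with h1 | h1
          · exact Or.inl (mkA _ ((Finset.inter_subset_left).trans hIA) h1)
          · exact Or.inr (mkA _ (Finset.union_subset hIA hJA) h1)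
        · -- I ⊆ A in S, o ∈ J with A \ J ∈ S'
          have hKS : X \ (A \ J) ∈ S := hJS'.2
          rcases hSclose _ hIS _ hKS with h1 | h1
          · -- I ∩ (X \ (A \ J)) = I ∩ J
            have heq : I ∩ (X \ (A \ J)) = I ∩ J := by
              ext x
              simp only [Finset.mem_inter, Finset.mem_sdiff]
              constructor
              · rintro ⟨hxI, -, hx⟩
                refine ⟨hxI, ?_⟩
                by_contra hxJ
                exact hx ⟨hIA hxI, hxJ⟩
              · rintro ⟨hxI, hxJ⟩
                exact ⟨hxI, hAX (hIA hxI), fun h => h.2 hxJ⟩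
            rw [heq] at h1
            exact Or.inl (mkA _ ((Finset.inter_subset_left).trans hIA) h1)
          · -- I ∪ (X \ (A \ J)) = X \ (A \ (I ∪ J))
            have heq : I ∪ (X \ (A \ J)) = X \ (A \ (I ∪ J)) := by
              ext x
              simp only [Finset.mem_union, Finset.mem_sdiff]
              constructor
              · rintro (hxI | ⟨hxX, hx⟩)
                · exact ⟨hAX (hIA hxI), fun h => h.2 (Or.inl hxI)⟩
                · refine ⟨hxX, fun h => hx ⟨h.1, fun hxJ => h.2 (Or.inr hxJ)⟩⟩
              · rintro ⟨hxX, hx⟩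
                by_cases hxI : x ∈ I
                · exact Or.inl hxI
                · refine Or.inr ⟨hxX, fun h => hx ⟨h.1, ?_⟩⟩
                  rintro (h' | h')
                  exacts [hxI h', h.2 h']
            rw [heq] at h1
            exact Or.inr (mkO _ (Finset.union_subset hIA1 hJA1)
              (Finset.mem_union_right _ hoJ) ⟨Finset.sdiff_subset.trans hAX, h1⟩)
      · rcases hJ with ⟨hJA, hJS⟩ | ⟨hoJ, hJS'⟩
        · -- symmetric mixed case
          have hKS : X \ (A \ I) ∈ S := hIS'.2
          rcases hSclose _ hJS _ hKS with h1 | h1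
          · have heq : J ∩ (X \ (A \ I)) = I ∩ J := by
              ext x
              simp only [Finset.mem_inter, Finset.mem_sdiff]
              constructor
              · rintro ⟨hxJ, -, hx⟩
                refine ⟨?_, hxJ⟩
                by_contra hxI
                exact hx ⟨hJA hxJ, hxI⟩
              · rintro ⟨hxI, hxJ⟩
                exact ⟨hxJ, hAX (hJA hxJ), fun h => h.2 hxI⟩
            rw [heq] at h1
            exact Or.inl (mkA _ ((Finset.inter_subset_right).trans hJA) h1)
          · have heq : J ∪ (X \ (A \ I)) = X \ (A \ (I ∪ J)) := by
              ext x
              simp only [Finset.mem_union, Finset.mem_sdiff]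
              constructor
              · rintro (hxJ | ⟨hxX, hx⟩)
                · exact ⟨hAX (hJA hxJ), fun h => h.2 (Or.inr hxJ)⟩
                · refine ⟨hxX, fun h => hx ⟨h.1, fun hxI => h.2 (Or.inl hxI)⟩⟩
              · rintro ⟨hxX, hx⟩
                by_cases hxJ : x ∈ J
                · exact Or.inl hxJ
                · refine Or.inr ⟨hxX, fun h => hx ⟨h.1, ?_⟩⟩
                  rintro (h' | h')
                  exacts [h.2 h', hxJ h']
            rw [heq] at h1
            exact Or.inr (mkO _ (Finset.union_subset hIA1 hJA1)
              (Finset.mem_union_left _ hoI) ⟨Finset.sdiff_subset.trans hAX, h1⟩)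
        · -- both contain o
          have h1 := hS'close _ hIS' _ hJS'
          have hint : A \ I ∩ (A \ J) = A \ (I ∪ J) := by
            ext x; simp only [Finset.mem_inter, Finset.mem_sdiff,
              Finset.mem_union]; tauto
          have huni : A \ I ∪ A \ J = A \ (I ∩ J) := by
            ext x; simp only [Finset.mem_union, Finset.mem_sdiff,
              Finset.mem_inter]; tauto
          rw [hint, huni] at h1
          rcases h1 with h1 | h1
          · exact Or.inr (mkO _ (Finset.union_subset hIA1 hJA1)
              (Finset.mem_union_left _ hoI) h1)
          · exact Or.inl (mkO _ ((Finset.inter_subset_left).trans hIA1)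
              (Finset.mem_inter.mpr ⟨hoI, hoJ⟩) h1)
  · -- precell dichotomy
    intro J hJ
    obtain ⟨hJA1, hJne, hJnA1⟩ := hJ
    by_cases hoJ : o ∈ J
    · -- o ∈ J; consider K = A \ J
      have hKA : A \ J ⊆ A := Finset.sdiff_subset
      have hKne : A \ J ≠ ∅ := by
        intro h
        apply hJnA1
        apply Finset.Subset.antisymm hJA1
        intro x hx
        rcases Finset.mem_insert.mp hx with h' | h'
        · exact h' ▸ hoJ
        · by_contra hxJ
          have : x ∈ A \ J := Finset.mem_sdiff.mpr ⟨h', hxJ⟩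
          simp [h] at this
      have hKpr : IsProperSubset X (A \ J) := by
        refine ⟨hKA.trans hAX, hKne, ?_⟩
        intro h
        have : o ∈ A \ J := h ▸ Finset.mem_insert_self o (A ∪ B)
        exact hoA (hKA this)
      rcases hdich _ hKpr with h1 | h1
      · -- A \ J ∈ S; then insert o A \ J ∈ restCell
        right
        have heq : insert o A \ J ⊆ A := by
          intro x hx
          rw [Finset.mem_sdiff, Finset.mem_insert] at hx
          rcases hx.1 with h' | h'
          · exact absurd (h' ▸ hoJ) hx.2
          · exact h'
        have heq2 : insert o A \ J = A \ J := by
          apply Finset.Subset.antisymm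
          · intro x hx
            exact Finset.mem_sdiff.mpr ⟨heq hx, (Finset.mem_sdiff.mp hx).2⟩
          · intro x hx
            rw [Finset.mem_sdiff] at hx ⊢
            exact ⟨Finset.mem_insert_of_mem hx.1, hx.2⟩
        refine ⟨⟨Finset.sdiff_subset, by rw [heq2]; exact hKne, ?_⟩,
          Or.inl ⟨heq, by rw [heq2]; exact h1⟩⟩
        intro h
        have : o ∈ insert o A \ J := by rw [h]; exact Finset.mem_insert_self o A
        exact (Finset.mem_sdiff.mp this).2 hoJ
      · -- X \ (A \ J) ∈ S so A \ J ∈ S', so J itself ∈ restCell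
        left
        exact ⟨⟨hJA1, hJne, hJnA1⟩, Or.inr ⟨hoJ, hKA.trans hAX, h1⟩⟩
    · -- o ∉ J, so J ⊆ A
      have hJA : J ⊆ A := by
        intro x hx
        rcases Finset.mem_insert.mp (hJA1 hx) with h' | h'
        · exact absurd (h' ▸ hx) hoJ
        · exact h'
      have hJpr : IsProperSubset X J := by
        refine ⟨hJA.trans hAX, hJne, ?_⟩
        intro h
        exact hoJ (h ▸ Finset.mem_insert_self o (A ∪ B))
      rcases hdich _ hJpr with h1 | h1
      · exact Or.inl ⟨⟨hJA1, hJne, hJnA1⟩, Or.inl ⟨hJA, h1⟩⟩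
      · -- X \ J ∈ S, i.e. J ∈ S'; then insert o A \ J contains o and
        -- A \ (insert o A \ J) = J ∈ S'
        right
        have hoK : o ∈ insert o A \ J :=
          Finset.mem_sdiff.mpr ⟨Finset.mem_insert_self o A, hoJ⟩
        have heq : A \ (insert o A \ J) = J := by
          ext x
          simp only [Finset.mem_sdiff, Finset.mem_insert]
          constructor
          · rintro ⟨hxA, hx⟩
            by_contra hxJ
            exact hx ⟨Or.inr hxA, hxJ⟩
          · intro hxJ
            exact ⟨hJA hxJ, fun h => h.2 hxJ⟩
        refine ⟨⟨Finset.sdiff_subset, ?_, ?_⟩, Or.inr ⟨hoK, ?_⟩⟩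
        · intro h; rw [h] at hoK; simp at hoK
        · intro h
          obtain ⟨x, hx⟩ := Finset.nonempty_iff_ne_empty.mpr hJne
          have : x ∈ insert o A \ J := by
            rw [h]; exact Finset.mem_insert_of_mem (hJA hx)
          exact (Finset.mem_sdiff.mp this).2 hx
        · rw [heq]; exact ⟨hJA.trans hAX, h1⟩

lemma restCell_opp_eq (hA : A.Nonempty) (hB : B.Nonempty) (hAB : Disjoint A B)
    (hoA : o ∉ A) (hoB : o ∉ B)
    (hS : IsPrecell (insert o (A ∪ B)) S) :
    restCell A o (opp (insert o (A ∪ B)) S) S =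
      opp (insert o A) (restCell A o S (opp (insert o (A ∪ B)) S)) := by
  set X := insert o (A ∪ B) with hXdef
  have hAX : A ⊆ X := fun x hx => by simp [hXdef, hx]
  obtain ⟨⟨hSne, hSprop, hSclose⟩, hdich⟩ := hS
  ext J
  simp only [restCell, opp, Set.mem_setOf_eq]
  constructor
  · rintro ⟨hJpr, hJ⟩
    obtain ⟨hJA1, hJne, hJnA1⟩ := hJpr
    have hcpr : IsProperSubset (insert o A) (insert o A \ J) :=
      proper_compl ⟨hJA1, hJne, hJnA1⟩
    refine ⟨hJA1, hcpr, ?_⟩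
    rcases hJ with ⟨hJA, hJS'⟩ | ⟨hoJ, hAJS⟩
    · -- J ⊆ A, J ∈ S'; show o ∈ insert o A \ J and A \ (insert o A \ J) = J ∈ S'
      have hoJ : o ∉ J := fun h => hoA (hJA h)
      refine Or.inr ⟨Finset.mem_sdiff.mpr ⟨Finset.mem_insert_self o A, hoJ⟩, ?_⟩
      have heq : A \ (insert o A \ J) = J := by
        ext x
        simp only [Finset.mem_sdiff, Finset.mem_insert]
        constructor
        · rintro ⟨hxA, hx⟩
          by_contra hxJ
          exact hx ⟨Or.inr hxA, hxJ⟩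
        · intro hxJ
          exact ⟨hJA hxJ, fun h => h.2 hxJ⟩
      rw [heq]; exact hJS'
    · -- o ∈ J, A \ J ∈ S; show insert o A \ J ⊆ A and = A \ J ∈ S
      have heq2 : insert o A \ J = A \ J := by
        ext x
        simp only [Finset.mem_sdiff, Finset.mem_insert]
        constructor
        · rintro ⟨h', hx⟩
          rcases h' with h' | h'
          · exact absurd (h' ▸ hoJ) hx
          · exact ⟨h', hx⟩
        · rintro ⟨hxA, hx⟩
          exact ⟨Or.inr hxA, hx⟩
      rw [heq2]
      exact Or.inl ⟨Finset.sdiff_subset, hAJS⟩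
  · rintro ⟨hJA1, hcpr, hc⟩
    have hJpr : IsProperSubset (insert o A) J := by
      have := proper_compl hcpr
      rwa [compl_compl_of_subset hJA1] at this
    refine ⟨hJpr, ?_⟩
    rcases hc with ⟨hcA, hcS⟩ | ⟨hoc, hcS'⟩
    · -- insert o A \ J ⊆ A means o ∈ J
      have hoJ : o ∈ J := by
        by_contra h
        exact hoA (hcA (Finset.mem_sdiff.mpr ⟨Finset.mem_insert_self o A, h⟩))
      have heq2 : insert o A \ J = A \ J := by
        ext x
        simp only [Finset.mem_sdiff, Finset.mem_insert]
        constructor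
        · rintro ⟨h', hx⟩
          rcases h' with h' | h'
          · exact absurd (h' ▸ hoJ) hx
          · exact ⟨h', hx⟩
        · rintro ⟨hxA, hx⟩
          exact ⟨Or.inr hxA, hx⟩
      rw [heq2] at hcS
      exact Or.inr ⟨hoJ, hcS⟩
    · -- o ∈ insert o A \ J means o ∉ J, so J ⊆ A; A \ (insert o A \ J) = J ∈ S'
      have hoJ : o ∉ J := (Finset.mem_sdiff.mp hoc).2
      have hJA : J ⊆ A := by
        intro x hx
        rcases Finset.mem_insert.mp (hJpr.1 hx) with h' | h'
        · exact absurd (h' ▸ hx) hoJ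
        · exact h'
      have heq : A \ (insert o A \ J) = J := by
        ext x
        simp only [Finset.mem_sdiff, Finset.mem_insert]
        constructor
        · rintro ⟨hxA, hx⟩
          by_contra hxJ
          exact hx ⟨Or.inr hxA, hxJ⟩
        · intro hxJ
          exact ⟨hJA hxJ, fun h => h.2 hxJ⟩
      rw [heq] at hcS'
      exact Or.inl ⟨hJA, hcS'⟩

lemma cell_restCell (hA : A.Nonempty) (hB : B.Nonempty) (hAB : Disjoint A B)
    (hoA : o ∉ A) (hoB : o ∉ B)
    (hS : IsCell (insert o (A ∪ B)) S) :
    IsCell (insert o A) (restCell A o S (opp (insert o (A ∪ B)) S)) := by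
  set X := insert o (A ∪ B) with hXdef
  have hAX : A ⊆ X := fun x hx => by simp [hXdef, hx]
  obtain ⟨hSpre, s, hsum, hpos⟩ := hS
  refine ⟨precell_restCell hA hB hAB hoA hoB hSpre, ?_⟩
  refine ⟨fun j => if j = o then -(∑ a ∈ A, s a) else s j, ?_, ?_⟩
  · have ht : ∀ j ∈ A, (if j = o then -(∑ a ∈ A, s a) else s j) = s j := by
      intro j hj
      rw [if_neg (fun (h : j = o) => hoA (h ▸ hj))]
    rw [Finset.sum_insert hoA, Finset.sum_congr rfl ht]
    simp
  · rintro J ⟨hJpr, hJ⟩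
    rcases hJ with ⟨hJA, hJS⟩ | ⟨hoJ, hJS'⟩
    · have : ∀ j ∈ J, (if j = o then -(∑ a ∈ A, s a) else s j) = s j := by
        intro j hj
        rw [if_neg (fun (h : j = o) => hoA (h ▸ hJA hj))]
      rw [Finset.sum_congr rfl this]
      exact hpos _ hJS
    · -- o ∈ J, A \ J ∈ S', i.e. X \ (A \ J) ∈ S
      have hKS : X \ (A \ J) ∈ S := hJS'.2
      have h1 : (0:ℝ) < ∑ j ∈ X \ (A \ J), s j := hpos _ hKS
      have h2 : ∑ j ∈ X \ (A \ J), s j = ∑ j ∈ X, s j - ∑ j ∈ A \ J, s j :=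
        Finset.sum_sdiff_eq_sub (Finset.sdiff_subset.trans hAX)
      rw [hsum] at h2
      -- ∑_J t = ∑_{J∩A} s - ∑_A s = -∑_{A\J} s
      have hJA1 : J ⊆ insert o A := hJpr.1
      have hJsplit : J = insert o (J ∩ A) := by
        ext x
        simp only [Finset.mem_insert, Finset.mem_inter]
        constructor
        · intro hx
          rcases Finset.mem_insert.mp (hJA1 hx) with h' | h'
          · exact Or.inl h'
          · exact Or.inr ⟨hx, h'⟩
        · rintro (h' | h')
          · exact h' ▸ hoJ
          · exact h'.1
      have hoJA : o ∉ J ∩ A := fun h => hoA (Finset.mem_inter.mp h).2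
      rw [hJsplit, Finset.sum_insert hoJA, if_pos rfl]
      have : ∀ j ∈ J ∩ A, (if j = o then -(∑ a ∈ A, s a) else s j) = s j := by
        intro j hj
        rw [if_neg (fun (h : j = o) => hoA (h ▸ (Finset.mem_inter.mp hj).2))]
      rw [Finset.sum_congr rfl this]
      have hsplitA : ∑ j ∈ A \ J, s j + ∑ j ∈ J ∩ A, s j = ∑ j ∈ A, s j := by
        have : J ∩ A ⊆ A := Finset.inter_subset_right
        have h3 : A \ (J ∩ A) = A \ J := by
          ext x; simp only [Finset.mem_sdiff, Finset.mem_inter]; tauto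
        rw [← h3]
        exact Finset.sum_sdiff this
      linarith

end Main

/-- `(S‖1,A)` and `(S'‖1,A)` are opposite precells relative to `A ∪ {1}`; cells if
`S` is a cell. -/
theorem restCell_precell {α : Type*} [DecidableEq α] (A B : Finset α) (o : α)
    (hA : A.Nonempty) (hB : B.Nonempty) (hAB : Disjoint A B)
    (hoA : o ∉ A) (hoB : o ∉ B)
    (X : Finset α) (hX : X = insert o (A ∪ B))
    (S : Set (Finset α)) (hS : IsPrecell X S) :
    (IsPrecell (insert o A) (restCell A o S (opp X S)) ∧
      restCell A o (opp X S) S = opp (insert o A) (restCell A o S (opp X S))) ∧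
    (IsCell X S →
      IsCell (insert o A) (restCell A o S (opp X S)) ∧
      IsCell (insert o A) (restCell A o (opp X S) S)) := by
  subst hX
  set X := insert o (A ∪ B) with hXdef
  have hprop : ∀ J ∈ S, IsProperSubset X J := hS.1.2.1
  refine ⟨⟨precell_restCell hA hB hAB hoA hoB hS,
    restCell_opp_eq hA hB hAB hoA hoB hS⟩, fun hc => ?_⟩
  refine ⟨cell_restCell hA hB hAB hoA hoB hc, ?_⟩
  have hc' : IsCell X (opp X S) := opp_cell_s15 hc
  have := cell_restCell hA hB hAB hoA hoB hc'
  rwa [opp_opp hprop] at this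

end GRF
end
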